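/- arXiv:2305.19410 — 4 statements merged into one kernel-verified Lean document; each statement's English description precedes it below -/
import Mathlib

section
/- Let N' be obtained from a network N by adding a single new reaction C -> D (not already in N). Then the change in deficiency delta(N') - delta(N) is either 0 or 1. -/
open Submodule

/-- A complex on `s` species: a vector of nonnegative integers. -/
abbrev Cplx (s : ℕ) := Fin s → ℕ

/-- The real vector associated to a complex. -/
def toR {s : ℕ} (C : Cplx s) : Fin s → ℝ := fun i => (C i : ℝ)

/-- A chemical reaction network on `s` species, given by its set of reactions
(ordered pairs of distinct complexes). -/
structure Network (s : ℕ) where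
  reactions : Finset (Cplx s × Cplx s)
  ne : ∀ r ∈ reactions, r.1 ≠ r.2

namespace Network

variable {s : ℕ}

/-- The complexes of a network: all sources and targets of reactions. -/
def complexes (N : Network s) : Finset (Cplx s) :=
  N.reactions.image Prod.fst ∪ N.reactions.image Prod.snd

/-- One (undirected) step in the reaction graph. -/
def step (N : Network s) (C D : Cplx s) : Prop :=
  (C, D) ∈ N.reactions ∨ (D, C) ∈ N.reactions

/-- Being connected by a path in the undirected reaction graph. -/
def linked (N : Network s) : Cplx s → Cplx s → Prop :=
  Relation.ReflTransGen N.step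

/-- `C` and `D` are complexes of `N` lying in a common linkage class. -/
def sameLinkageClass (N : Network s) (C D : Cplx s) : Prop :=
  C ∈ N.complexes ∧ D ∈ N.complexes ∧ N.linked C D

/-- The linkage class of a complex `C`. -/
def linkageClass (N : Network s) (C : Cplx s) : Set (Cplx s) :=
  {D | N.linked C D}

/-- The number of complexes `c_N`. -/
def numComplexes (N : Network s) : ℕ := N.complexes.card

/-- The number of linkage classes `ℓ_N`. -/
noncomputable def numLinkage (N : Network s) : ℕ :=
  Set.ncard {S : Set (Cplx s) | ∃ C ∈ N.complexes, S = N.linkageClass C}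

/-- The number of reactions `r_N`. -/
def numReactions (N : Network s) : ℕ := N.reactions.card

/-- The stoichiometric subspace: the real span of all reaction vectors. -/
def stoichSubspace (N : Network s) : Submodule ℝ (Fin s → ℝ) :=
  Submodule.span ℝ {v | ∃ r ∈ N.reactions, v = toR r.2 - toR r.1}

/-- The rank of the network. -/
noncomputable def rank (N : Network s) : ℕ :=
  Module.finrank ℝ N.stoichSubspace

/-- The deficiency `δ(N) = c_N - ℓ_N - rk(N)`. -/
noncomputable def deficiency (N : Network s) : ℤ :=
  (N.numComplexes : ℤ) - N.numLinkage - N.rank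

/-- The cyclomatic number `cyc(N) = r_N - c_N + ℓ_N`. -/
noncomputable def cyc (N : Network s) : ℤ :=
  (N.numReactions : ℤ) - N.numComplexes + N.numLinkage

end Network

namespace Network
variable {s : ℕ}

lemma linked_symm (N : Network s) {X Y : Cplx s} (hl : N.linked X Y) : N.linked Y X := by
  induction hl with
  | refl => exact .refl
  | tail _ hstep ih => exact Relation.ReflTransGen.head (Or.symm hstep) ih

lemma mem_complexes_of_step (N : Network s) {X Y : Cplx s} (hs : N.step X Y) :
    Y ∈ N.complexes := by
  rcases hs with h1 | h1
  · exact Finset.mem_union_right _ (Finset.mem_image.mpr ⟨(X, Y), h1, rfl⟩)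
  · exact Finset.mem_union_left _ (Finset.mem_image.mpr ⟨(Y, X), h1, rfl⟩)

lemma eq_or_mem_of_linked (N : Network s) {X Y : Cplx s} (hl : N.linked X Y) :
    X = Y ∨ Y ∈ N.complexes := by
  induction hl with
  | refl => exact Or.inl rfl
  | tail _ hstep _ => exact Or.inr (N.mem_complexes_of_step hstep)

lemma eq_of_linked_not_mem (N : Network s) {X Y : Cplx s} (hY : Y ∉ N.complexes)
    (hl : N.linked X Y) : X = Y := by
  rcases N.eq_or_mem_of_linked hl with h | h
  · exact h
  · exact absurd h hY

lemma linkageClass_eq_iff (N : Network s) {X Y : Cplx s} :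
    N.linkageClass X = N.linkageClass Y ↔ N.linked X Y := by
  constructor
  · intro hcl
    have : Y ∈ N.linkageClass Y := Relation.ReflTransGen.refl
    rw [← hcl] at this; exact this
  · intro hl
    ext Z
    constructor
    · intro hXZ; exact Relation.ReflTransGen.trans (N.linked_symm hl) hXZ
    · intro hYZ; exact Relation.ReflTransGen.trans hl hYZ

lemma sub_mem_stoich_of_linked (N : Network s) {X Y : Cplx s} (hl : N.linked X Y) :
    toR Y - toR X ∈ N.stoichSubspace := by
  induction hl with
  | refl => simpa using zero_mem N.stoichSubspace
  | @tail b c _ hstep ih =>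
    have hb : toR c - toR b ∈ N.stoichSubspace := by
      rcases hstep with h1 | h1
      · exact subset_span ⟨(b, c), h1, rfl⟩
      · have hmem : toR b - toR c ∈ {v | ∃ r ∈ N.reactions, v = toR r.2 - toR r.1} :=
          ⟨(c, b), h1, rfl⟩
        have h2 : toR b - toR c ∈ N.stoichSubspace := subset_span hmem
        simpa using neg_mem h2
    have := add_mem hb ih
    simpa [sub_add_sub_cancel] using this

lemma classes_eq (N : Network s) :
    {S : Set (Cplx s) | ∃ C ∈ N.complexes, S = N.linkageClass C}
      = N.linkageClass '' ↑N.complexes := by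
  ext S
  simp only [Set.mem_setOf_eq, Set.mem_image, Finset.mem_coe, eq_comm]

end Network

namespace Network
variable {s : ℕ}

lemma step_insert_iff {N N' : Network s} {C D : Cplx s}
    (h : N'.reactions = insert (C, D) N.reactions) {X Y : Cplx s} :
    N'.step X Y ↔ N.step X Y ∨ (X = C ∧ Y = D) ∨ (X = D ∧ Y = C) := by
  simp only [step, h, Finset.mem_insert, Prod.mk.injEq]
  tauto

lemma linked_of_linked_insert {N N' : Network s} {C D : Cplx s}
    (h : N'.reactions = insert (C, D) N.reactions) {X Y : Cplx s}
    (hl : N.linked X Y) : N'.linked X Y :=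
  Relation.ReflTransGen.mono (r := N.step) (p := N'.step)
    (fun _ _ hs => (step_insert_iff h).mpr (Or.inl hs)) X Y hl

lemma linked_insert_CD {N N' : Network s} {C D : Cplx s}
    (h : N'.reactions = insert (C, D) N.reactions) : N'.linked C D :=
  Relation.ReflTransGen.single ((step_insert_iff h).mpr (Or.inr (Or.inl ⟨rfl, rfl⟩)))

/-- Master lemma describing connectivity after inserting the edge C-D. -/
lemma linked_insert_iff {N N' : Network s} {C D : Cplx s}
    (h : N'.reactions = insert (C, D) N.reactions) {X Y : Cplx s} :
    N'.linked X Y ↔ N.linked X Y ∨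
      ((N.linked X C ∨ N.linked X D) ∧ (N.linked Y C ∨ N.linked Y D)) := by
  constructor
  · intro hl
    induction hl with
    | refl => exact Or.inl Relation.ReflTransGen.refl
    | @tail b c _ hstep ih =>
      rcases (step_insert_iff h).mp hstep with hs | ⟨rfl, rfl⟩ | ⟨rfl, rfl⟩
      · rcases ih with hXb | ⟨hX, hb⟩
        · exact Or.inl (hXb.tail hs)
        · refine Or.inr ⟨hX, ?_⟩
          have hcb : N.linked c b := Relation.ReflTransGen.single (Or.symm hs)
          rcases hb with hbC | hbD
          · exact Or.inl (hcb.trans hbC)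
          · exact Or.inr (hcb.trans hbD)
      · rcases ih with hXC | ⟨hX, _⟩
        · exact Or.inr ⟨Or.inl hXC, Or.inr Relation.ReflTransGen.refl⟩
        · exact Or.inr ⟨hX, Or.inr Relation.ReflTransGen.refl⟩
      · rcases ih with hXD | ⟨hX, _⟩
        · exact Or.inr ⟨Or.inr hXD, Or.inl Relation.ReflTransGen.refl⟩
        · exact Or.inr ⟨hX, Or.inl Relation.ReflTransGen.refl⟩
  · intro hl
    have eCD : N'.linked C D := linked_insert_CD h
    rcases hl with hl | ⟨hX, hY⟩
    · exact linked_of_linked_insert h hl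
    · have hX' : N'.linked X C := by
        rcases hX with hx | hx
        · exact linked_of_linked_insert h hx
        · exact (linked_of_linked_insert h hx).trans (N'.linked_symm eCD)
      have hY' : N'.linked Y C := by
        rcases hY with hy | hy
        · exact linked_of_linked_insert h hy
        · exact (linked_of_linked_insert h hy).trans (N'.linked_symm eCD)
      exact hX'.trans (N'.linked_symm hY')

lemma complexes_insert {N N' : Network s} {C D : Cplx s}
    (h : N'.reactions = insert (C, D) N.reactions) :
    N'.complexes = insert C (insert D N.complexes) := by
  ext X
  simp only [complexes, h, Finset.mem_union, Finset.mem_image, Finset.mem_insert,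
    Prod.exists]
  constructor
  · rintro (⟨a, b, hab, rfl⟩ | ⟨a, b, hab, rfl⟩)
    · rcases hab with heq | hm
      · exact Or.inl (congrArg Prod.fst heq)
      · exact Or.inr (Or.inr (Or.inl ⟨a, b, hm, rfl⟩))
    · rcases hab with heq | hm
      · exact Or.inr (Or.inl (congrArg Prod.snd heq))
      · exact Or.inr (Or.inr (Or.inr ⟨a, b, hm, rfl⟩))
  · rintro (rfl | rfl | ⟨a, b, hm, rfl⟩ | ⟨a, b, hm, rfl⟩)
    · exact Or.inl ⟨X, D, Or.inl rfl, rfl⟩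
    · exact Or.inr ⟨C, X, Or.inl rfl, rfl⟩
    · exact Or.inl ⟨a, b, Or.inr hm, rfl⟩
    · exact Or.inr ⟨a, b, Or.inr hm, rfl⟩

lemma stoich_insert {N N' : Network s} {C D : Cplx s}
    (h : N'.reactions = insert (C, D) N.reactions) :
    N'.stoichSubspace = (span ℝ {toR D - toR C}) ⊔ N.stoichSubspace := by
  unfold stoichSubspace
  rw [h, ← Submodule.span_insert]
  congr 1
  ext v
  simp only [Set.mem_insert_iff, Set.mem_setOf_eq, Finset.mem_insert, Prod.exists]
  constructor
  · rintro ⟨a, b, hab | hm, rfl⟩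
    · rw [Prod.mk.injEq] at hab
      obtain ⟨rfl, rfl⟩ := hab
      exact Or.inl rfl
    · exact Or.inr ⟨a, b, hm, rfl⟩
  · rintro (rfl | ⟨a, b, hm, rfl⟩)
    · exact ⟨C, D, Or.inl rfl, rfl⟩
    · exact ⟨a, b, Or.inr hm, rfl⟩

lemma rank_le_rank_insert {N N' : Network s} {C D : Cplx s}
    (h : N'.reactions = insert (C, D) N.reactions) : N.rank ≤ N'.rank := by
  apply Submodule.finrank_mono
  rw [stoich_insert h]
  exact le_sup_right

lemma rank_insert_le {N N' : Network s} {C D : Cplx s}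
    (h : N'.reactions = insert (C, D) N.reactions) : N'.rank ≤ N.rank + 1 := by
  unfold rank
  rw [stoich_insert h]
  have h1 := Submodule.finrank_sup_add_finrank_inf_eq (span ℝ {toR D - toR C}) N.stoichSubspace
  have h2 : Module.finrank ℝ (span ℝ {toR D - toR C}) ≤ 1 := by
    by_cases hv : toR D - toR C = 0
    · rw [hv, Submodule.span_zero_singleton]
      simp
    · rw [finrank_span_singleton hv]
  omega

lemma rank_insert_eq_of_mem {N N' : Network s} {C D : Cplx s}
    (h : N'.reactions = insert (C, D) N.reactions)
    (hv : toR D - toR C ∈ N.stoichSubspace) : N'.rank = N.rank := by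
  have heq : N'.stoichSubspace = N.stoichSubspace := by
    rw [stoich_insert h]
    refine sup_eq_right.mpr ?_
    rwa [Submodule.span_le, Set.singleton_subset_iff]
  exact congrArg (fun S : Submodule ℝ (Fin s → ℝ) => Module.finrank ℝ S) heq

end Network

namespace Network
variable {s : ℕ}

/-- Push a set of complexes forward to its `N'`-saturation. -/
def push (N' : Network s) (S : Set (Cplx s)) : Set (Cplx s) := {Y | ∃ X ∈ S, N'.linked X Y}

lemma push_linkageClass {N N' : Network s} {C D : Cplx s}
    (h : N'.reactions = insert (C, D) N.reactions) (X : Cplx s) :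
    N'.push (N.linkageClass X) = N'.linkageClass X := by
  ext Y
  constructor
  · rintro ⟨Z, hXZ, hZY⟩
    exact (linked_of_linked_insert h hXZ).trans hZY
  · intro hXY
    exact ⟨X, Relation.ReflTransGen.refl, hXY⟩

lemma classes_finite (N : Network s) :
    {S : Set (Cplx s) | ∃ C ∈ N.complexes, S = N.linkageClass C}.Finite := by
  rw [classes_eq]
  exact N.complexes.finite_toSet.image _

/-- Case A: both complexes old and already linked. -/
lemma numLinkage_insert_of_linked {N N' : Network s} {C D : Cplx s}
    (h : N'.reactions = insert (C, D) N.reactions)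
    (hC : C ∈ N.complexes) (hD : D ∈ N.complexes) (hCD : N.linked C D) :
    N'.numLinkage = N.numLinkage := by
  have hcompl : N'.complexes = N.complexes := by
    rw [complexes_insert h, Finset.insert_eq_self.mpr hD, Finset.insert_eq_self.mpr hC]
  have hlink : ∀ X Y : Cplx s, N'.linked X Y ↔ N.linked X Y := by
    intro X Y
    rw [linked_insert_iff h]
    constructor
    · rintro (hl | ⟨hX, hY⟩)
      · exact hl
      · have hX' : N.linked X C := by
          rcases hX with hx | hx
          · exact hx
          · exact hx.trans (N.linked_symm hCD)
        have hY' : N.linked Y C := by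
          rcases hY with hy | hy
          · exact hy
          · exact hy.trans (N.linked_symm hCD)
        exact hX'.trans (N.linked_symm hY')
    · exact Or.inl
  have hcl : ∀ X : Cplx s, N'.linkageClass X = N.linkageClass X := by
    intro X; ext Y; exact hlink X Y
  unfold numLinkage
  simp only [hcompl, hcl]

/-- Case D: both complexes new. -/
lemma numLinkage_insert_of_both_new {N N' : Network s} {C D : Cplx s}
    (h : N'.reactions = insert (C, D) N.reactions)
    (hC : C ∉ N.complexes) (hD : D ∉ N.complexes) :
    N'.numLinkage = N.numLinkage + 1 := by
  have hcl : ∀ X ∈ N.complexes, N'.linkageClass X = N.linkageClass X := by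
    intro X hX
    ext Y
    show N'.linked X Y ↔ N.linked X Y
    rw [linked_insert_iff h]
    constructor
    · rintro (hl | ⟨hXc, _⟩)
      · exact hl
      · exfalso
        rcases hXc with hx | hx
        · exact hC (N.eq_of_linked_not_mem hC hx ▸ hX)
        · exact hD (N.eq_of_linked_not_mem hD hx ▸ hX)
    · exact Or.inl
  have hclCD : N'.linkageClass D = N'.linkageClass C :=
    (linkageClass_eq_iff N').mpr (N'.linked_symm (linked_insert_CD h))
  have himg : N'.linkageClass '' ↑N.complexes = N.linkageClass '' ↑N.complexes :=
    Set.image_congr fun X hX => hcl X hX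
  have hLN' : {S : Set (Cplx s) | ∃ E ∈ N'.complexes, S = N'.linkageClass E}
      = insert (N'.linkageClass C) (N.linkageClass '' ↑N.complexes) := by
    rw [classes_eq, complexes_insert h]
    push_cast [Finset.coe_insert]
    rw [Set.image_insert_eq, Set.image_insert_eq, hclCD, Set.insert_idem, himg]
  have hnotmem : N'.linkageClass C ∉ N.linkageClass '' ↑N.complexes := by
    rintro ⟨X, hX, hXC⟩
    have hmemC : C ∈ N.linkageClass X := by
      rw [hXC]; exact Relation.ReflTransGen.refl
    have : X = C := N.eq_of_linked_not_mem hC hmemC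
    exact hC (this ▸ hX)
  unfold numLinkage
  rw [hLN', Set.ncard_insert_of_notMem hnotmem (N.complexes.finite_toSet.image _),
    ← classes_eq]

/-- Case C: exactly one complex new. -/
lemma numLinkage_insert_of_one_new {N N' : Network s} {C D : Cplx s}
    (h : N'.reactions = insert (C, D) N.reactions)
    (hmem : (C ∈ N.complexes ∧ D ∉ N.complexes) ∨ (D ∈ N.complexes ∧ C ∉ N.complexes)) :
    N'.numLinkage = N.numLinkage := by
  have back : ∀ X ∈ N.complexes, ∀ Y ∈ N.complexes, N'.linked X Y → N.linked X Y := by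
    intro X hX Y hY hl
    rcases (linked_insert_iff h).mp hl with hl' | ⟨hXc, hYc⟩
    · exact hl'
    · rcases hmem with ⟨_, hD⟩ | ⟨_, hC⟩
      · have hX' : N.linked X C := by
          rcases hXc with hx | hx
          · exact hx
          · exact absurd (N.eq_of_linked_not_mem hD hx ▸ hX) hD
        have hY' : N.linked Y C := by
          rcases hYc with hy | hy
          · exact hy
          · exact absurd (N.eq_of_linked_not_mem hD hy ▸ hY) hD
        exact hX'.trans (N.linked_symm hY')
      · have hX' : N.linked X D := by
          rcases hXc with hx | hx
          · exact absurd (N.eq_of_linked_not_mem hC hx ▸ hX) hC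
          · exact hx
        have hY' : N.linked Y D := by
          rcases hYc with hy | hy
          · exact absurd (N.eq_of_linked_not_mem hC hy ▸ hY) hC
          · exact hy
        exact hX'.trans (N.linked_symm hY')
  have hclCD : N'.linkageClass D = N'.linkageClass C :=
    (linkageClass_eq_iff N').mpr (N'.linked_symm (linked_insert_CD h))
  have hmemC' : N'.linkageClass C ∈ N'.linkageClass '' ↑N.complexes := by
    rcases hmem with ⟨hCm, _⟩ | ⟨hDm, _⟩
    · exact ⟨C, hCm, rfl⟩
    · exact ⟨D, hDm, hclCD⟩
  have hLN' : {S : Set (Cplx s) | ∃ E ∈ N'.complexes, S = N'.linkageClass E}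
      = N'.linkageClass '' ↑N.complexes := by
    rw [classes_eq, complexes_insert h]
    push_cast [Finset.coe_insert]
    rw [Set.image_insert_eq, Set.image_insert_eq, hclCD,
      Set.insert_eq_self.mpr hmemC', Set.insert_eq_self.mpr hmemC']
  have himg : N'.linkageClass '' ↑N.complexes
      = N'.push '' (N.linkageClass '' ↑N.complexes) := by
    rw [Set.image_image]
    exact (Set.image_congr fun X _ => (push_linkageClass h X).symm)
  have hinj : Set.InjOn N'.push (N.linkageClass '' ↑N.complexes) := by
    rintro S1 ⟨X, hX, rfl⟩ S2 ⟨Y, hY, rfl⟩ heq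
    rw [push_linkageClass h, push_linkageClass h] at heq
    exact (linkageClass_eq_iff N).mpr (back X hX Y hY ((linkageClass_eq_iff N').mp heq))
  unfold numLinkage
  rw [hLN', himg, Set.ncard_image_of_injOn hinj, ← classes_eq]

/-- Case B: both complexes old, not linked. -/
lemma numLinkage_insert_of_not_linked {N N' : Network s} {C D : Cplx s}
    (h : N'.reactions = insert (C, D) N.reactions)
    (hC : C ∈ N.complexes) (hD : D ∈ N.complexes) (hCD : ¬ N.linked C D) :
    N'.numLinkage + 1 = N.numLinkage := by
  set K := N.linkageClass '' ↑N.complexes with hK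
  have hKfin : K.Finite := N.complexes.finite_toSet.image _
  have hDK : N.linkageClass D ∈ K := ⟨D, hD, rfl⟩
  have hCK' : N.linkageClass C ∈ K \ {N.linkageClass D} := by
    refine ⟨⟨C, hC, rfl⟩, ?_⟩
    simp only [Set.mem_singleton_iff]
    exact fun heq => hCD ((linkageClass_eq_iff N).mp heq)
  have hclCD : N'.linkageClass D = N'.linkageClass C :=
    (linkageClass_eq_iff N').mpr (N'.linked_symm (linked_insert_CD h))
  have hcompl : N'.complexes = N.complexes := by
    rw [complexes_insert h, Finset.insert_eq_self.mpr hD, Finset.insert_eq_self.mpr hC]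
  have hLN' : {S : Set (Cplx s) | ∃ E ∈ N'.complexes, S = N'.linkageClass E}
      = N'.push '' K := by
    rw [classes_eq, hcompl, hK, Set.image_image]
    exact Set.image_congr fun X _ => (push_linkageClass h X).symm
  have hdrop : N'.push '' K = N'.push '' (K \ {N.linkageClass D}) := by
    have hKsplit : insert (N.linkageClass D) (K \ {N.linkageClass D}) = K := by
      rw [Set.insert_diff_singleton]
      exact Set.insert_eq_self.mpr hDK
    conv_lhs => rw [← hKsplit]
    rw [Set.image_insert_eq]
    refine Set.insert_eq_self.mpr ?_
    refine ⟨N.linkageClass C, hCK', ?_⟩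
    rw [push_linkageClass h, push_linkageClass h, hclCD]
  have hinj : Set.InjOn N'.push (K \ {N.linkageClass D}) := by
    rintro S1 ⟨⟨X, hX, rfl⟩, hX2⟩ S2 ⟨⟨Y, hY, rfl⟩, hY2⟩ heq
    simp only [Set.mem_singleton_iff] at hX2 hY2
    rw [push_linkageClass h, push_linkageClass h] at heq
    have hl' : N'.linked X Y := (linkageClass_eq_iff N').mp heq
    refine (linkageClass_eq_iff N).mpr ?_
    rcases (linked_insert_iff h).mp hl' with hl | ⟨hXc, hYc⟩
    · exact hl
    · have hX' : N.linked X C := by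
        rcases hXc with hx | hx
        · exact hx
        · exact absurd ((linkageClass_eq_iff N).mpr hx) hX2
      have hY' : N.linked Y C := by
        rcases hYc with hy | hy
        · exact hy
        · exact absurd ((linkageClass_eq_iff N).mpr hy) hY2
      exact hX'.trans (N.linked_symm hY')
  unfold numLinkage
  rw [hLN', hdrop, Set.ncard_image_of_injOn hinj, classes_eq, ← hK]
  exact Set.ncard_diff_singleton_add_one hDK hKfin

end Network

theorem stmt2 {s : ℕ} (N N' : Network s) (C D : Cplx s)
    (hnew : (C, D) ∉ N.reactions)
    (h : N'.reactions = insert (C, D) N.reactions) :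
    N'.deficiency - N.deficiency = 0 ∨ N'.deficiency - N.deficiency = 1 := by
  have hmemCD : (C, D) ∈ N'.reactions := by
    rw [h]; exact Finset.mem_insert_self _ _
  have hne : C ≠ D := N'.ne (C, D) hmemCD
  have hr1 : N.rank ≤ N'.rank := Network.rank_le_rank_insert h
  have hr2 : N'.rank ≤ N.rank + 1 := Network.rank_insert_le h
  by_cases hC : C ∈ N.complexes <;> by_cases hD : D ∈ N.complexes
  · -- both old
    have hc : N'.numComplexes = N.numComplexes := by
      unfold Network.numComplexes
      rw [Network.complexes_insert h, Finset.insert_eq_self.mpr hD,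
        Finset.insert_eq_self.mpr hC]
    by_cases hlink : N.linked C D
    · have hl := Network.numLinkage_insert_of_linked h hC hD hlink
      have hr : N'.rank = N.rank :=
        Network.rank_insert_eq_of_mem h (N.sub_mem_stoich_of_linked hlink)
      simp only [Network.deficiency, hl, hc, hr]
      omega
    · have hl := Network.numLinkage_insert_of_not_linked h hC hD hlink
      simp only [Network.deficiency]
      omega
  · -- C old, D new
    have hl := Network.numLinkage_insert_of_one_new h (Or.inl ⟨hC, hD⟩)
    have hc : N'.numComplexes = N.numComplexes + 1 := by
      unfold Network.numComplexes
      rw [Network.complexes_insert h,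
        Finset.insert_eq_self.mpr (Finset.mem_insert_of_mem hC),
        Finset.card_insert_of_notMem hD]
    simp only [Network.deficiency]
    omega
  · -- D old, C new
    have hl := Network.numLinkage_insert_of_one_new h (Or.inr ⟨hD, hC⟩)
    have hc : N'.numComplexes = N.numComplexes + 1 := by
      unfold Network.numComplexes
      rw [Network.complexes_insert h, Finset.insert_eq_self.mpr hD,
        Finset.card_insert_of_notMem hC]
    simp only [Network.deficiency]
    omega
  · -- both new
    have hl := Network.numLinkage_insert_of_both_new h hC hD
    have hc : N'.numComplexes = N.numComplexes + 2 := by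
      unfold Network.numComplexes
      have hCni : C ∉ insert D N.complexes := by
        simp only [Finset.mem_insert]
        tauto
      rw [Network.complexes_insert h, Finset.card_insert_of_notMem hCni,
        Finset.card_insert_of_notMem hD]
    simp only [Network.deficiency]
    omega
end

section
/- Let N' be obtained from a network N by an E3 operation (adding a new species Y into some existing reactions, preserving the number of reactions; the rank condition is not needed). Then ell_{N'} - ell_N <= c_{N'} - c_N, i.e., the increase in the number of linkage classes is at most the increase in the number of complexes. -/
open Submodule

/-- Delete the coordinate of the new species `Y` (the last species). -/
def proj {s : ℕ} (C : Cplx (s + 1)) : Cplx s := fun i => C i.castSucc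

namespace Network

variable {s : ℕ}

open scoped Classical

theorem linked_refl (N : Network s) (C : Cplx s) : N.linked C C := Relation.ReflTransGen.refl

theorem linked_symm_s8 (N : Network s) {C D : Cplx s} (h : N.linked C D) : N.linked D C :=
  by induction h with
    | refl => exact Relation.ReflTransGen.refl
    | tail _ hs ih => exact Relation.ReflTransGen.head (Or.symm hs) ih

theorem linked_trans (N : Network s) {C D E : Cplx s} (h : N.linked C D) (h' : N.linked D E) :
    N.linked C E := Relation.ReflTransGen.trans h h'

theorem class_eq_iff (N : Network s) {C D : Cplx s} :
    N.linkageClass C = N.linkageClass D ↔ N.linked C D := by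
  constructor
  · intro h
    have : D ∈ N.linkageClass D := N.linked_refl D
    rw [← h] at this; exact this
  · intro h
    ext E
    simp only [linkageClass, Set.mem_setOf_eq]
    exact ⟨fun h' => N.linked_trans (N.linked_symm_s8 h) h', fun h' => N.linked_trans h h'⟩

/-- The linkage classes, as a finset. -/
noncomputable def classes (N : Network s) : Finset (Set (Cplx s)) :=
  N.complexes.image N.linkageClass

theorem numLinkage_eq (N : Network s) : N.numLinkage = N.classes.card := by
  rw [numLinkage, show {S : Set (Cplx s) | ∃ C ∈ N.complexes, S = N.linkageClass C}
      = ↑N.classes from ?_, Set.ncard_coe_finset]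
  ext S; simp [classes, eq_comm]

theorem mem_complexes {N : Network s} {C : Cplx s} :
    C ∈ N.complexes ↔ ∃ r ∈ N.reactions, r.1 = C ∨ r.2 = C := by
  simp only [complexes, Finset.mem_union, Finset.mem_image]
  constructor
  · rintro (⟨r, hr, h⟩ | ⟨r, hr, h⟩) <;> exact ⟨r, hr, by tauto⟩
  · rintro ⟨r, hr, h | h⟩
    · exact Or.inl ⟨r, hr, h⟩
    · exact Or.inr ⟨r, hr, h⟩

theorem linked_eq_of_not_mem {N : Network s} {a D : Cplx s} (ha : a ∉ N.complexes) :
    N.linked a D ↔ D = a := by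
  constructor
  · intro h
    rcases h.cases_head with h | ⟨E, hE, _⟩
    · exact h.symm
    · exfalso; apply ha; rw [mem_complexes]
      rcases hE with h | h
      · exact ⟨(a, E), h, Or.inl rfl⟩
      · exact ⟨(E, a), h, Or.inr rfl⟩
  · rintro rfl; exact N.linked_refl _

theorem linked_eq_of_not_mem' {N : Network s} {a C : Cplx s} (ha : a ∉ N.complexes) :
    N.linked C a ↔ C = a :=
  ⟨fun h => (linked_eq_of_not_mem ha).mp (N.linked_symm_s8 h),
   fun h => h ▸ N.linked_refl _⟩

section Insert

variable {N1 N2 : Network s} {a b : Cplx s}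

theorem complexes2 (h2 : N2.reactions = insert (a, b) N1.reactions) :
    N2.complexes = insert a (insert b N1.complexes) := by
  ext C
  simp only [complexes, h2, Finset.image_insert, Finset.mem_union, Finset.mem_insert,
    Finset.mem_image]
  aesop

theorem step2_iff (h2 : N2.reactions = insert (a, b) N1.reactions) {C D : Cplx s} :
    N2.step C D ↔ N1.step C D ∨ (C = a ∧ D = b) ∨ (C = b ∧ D = a) := by
  simp only [step, h2, Finset.mem_insert, Prod.mk.injEq]
  tauto

theorem linked_mono (h2 : N2.reactions = insert (a, b) N1.reactions) {C D : Cplx s}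
    (h : N1.linked C D) : N2.linked C D := by
  refine Relation.ReflTransGen.mono (fun E F hEF => ?_) _ _ h
  rw [step2_iff h2]; exact Or.inl hEF

theorem linked2_ab (h2 : N2.reactions = insert (a, b) N1.reactions) : N2.linked a b := by
  refine Relation.ReflTransGen.single ?_
  rw [step2_iff h2]; exact Or.inr (Or.inl ⟨rfl, rfl⟩)

theorem linked2_iff (h2 : N2.reactions = insert (a, b) N1.reactions) (C D : Cplx s) :
    N2.linked C D ↔ N1.linked C D ∨ (N1.linked C a ∧ N1.linked b D) ∨
      (N1.linked C b ∧ N1.linked a D) := by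
  constructor
  · intro h
    induction h with
    | refl => exact Or.inl (N1.linked_refl C)
    | tail _ hstep ih =>
      rename_i D E _
      rw [step2_iff h2] at hstep
      rcases hstep with hs | ⟨rfl, rfl⟩ | ⟨rfl, rfl⟩
      · have hDE : N1.linked D E := Relation.ReflTransGen.single hs
        rcases ih with h | ⟨h1, h3⟩ | ⟨h1, h3⟩
        · exact Or.inl (N1.linked_trans h hDE)
        · exact Or.inr (Or.inl ⟨h1, N1.linked_trans h3 hDE⟩)
        · exact Or.inr (Or.inr ⟨h1, N1.linked_trans h3 hDE⟩)
      · rcases ih with h | ⟨h1, h3⟩ | ⟨h1, h3⟩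
        · exact Or.inr (Or.inl ⟨h, N1.linked_refl _⟩)
        · exact Or.inr (Or.inl ⟨h1, N1.linked_refl _⟩)
        · exact Or.inl h1
      · rcases ih with h | ⟨h1, h3⟩ | ⟨h1, h3⟩
        · exact Or.inr (Or.inr ⟨h, N1.linked_refl _⟩)
        · exact Or.inl h1
        · exact Or.inr (Or.inr ⟨h1, N1.linked_refl _⟩)
  · rintro (h | ⟨h1, h3⟩ | ⟨h1, h3⟩)
    · exact linked_mono h2 h
    · exact N2.linked_trans (linked_mono h2 h1)
        (N2.linked_trans (linked2_ab h2) (linked_mono h2 h3))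
    · exact N2.linked_trans (linked_mono h2 h1)
        (N2.linked_trans (N2.linked_symm_s8 (linked2_ab h2)) (linked_mono h2 h3))

end Insert

section Core

variable {N1 N2 : Network s} {a b : Cplx s}

/-- The map on linkage classes induced by inserting the edge `(a, b)`. -/
noncomputable def gmap (N1 N2 : Network s) (a b : Cplx s) : Set (Cplx s) → Set (Cplx s) :=
  fun S => if S = N1.linkageClass a ∨ S = N1.linkageClass b then N2.linkageClass a else S

variable (hl : ∀ C D, N2.linked C D ↔ N1.linked C D ∨ (N1.linked C a ∧ N1.linked b D) ∨
      (N1.linked C b ∧ N1.linked a D))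

include hl

theorem core_lab : N2.linked a b :=
  (hl a b).mpr (Or.inr (Or.inl ⟨N1.linked_refl _, N1.linked_refl _⟩))

theorem core_cls_ab : N2.linkageClass a = N2.linkageClass b :=
  (class_eq_iff N2).mpr (core_lab hl)

theorem core_mono {C D : Cplx s} (h : N1.linked C D) : N2.linked C D :=
  (hl C D).mpr (Or.inl h)

theorem core_cls_stable {C : Cplx s} (hca : ¬N1.linked C a) (hcb : ¬N1.linked C b) :
    N2.linkageClass C = N1.linkageClass C := by
  ext D
  simp only [linkageClass, Set.mem_setOf_eq, hl C D]
  tauto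

theorem core_himg (C : Cplx s) :
    N2.linkageClass C = gmap N1 N2 a b (N1.linkageClass C) := by
  unfold gmap
  by_cases hca : N1.linked C a
  · rw [if_pos (Or.inl ((class_eq_iff N1).mpr hca))]
    exact (class_eq_iff N2).mpr (core_mono hl hca)
  · by_cases hcb : N1.linked C b
    · rw [if_pos (Or.inr ((class_eq_iff N1).mpr hcb))]
      rw [(class_eq_iff N2).mpr (core_mono hl hcb), core_cls_ab hl]
    · rw [if_neg, core_cls_stable hl hca hcb]
      exact not_or.mpr
        ⟨fun h => hca ((class_eq_iff N1).mp h), fun h => hcb ((class_eq_iff N1).mp h)⟩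

theorem core_classes (h2c : N2.complexes = insert a (insert b N1.complexes)) :
    N2.classes = insert (N2.linkageClass a) (insert (N2.linkageClass b)
      (N1.classes.image (gmap N1 N2 a b))) := by
  rw [classes, h2c, Finset.image_insert, Finset.image_insert]
  congr 1
  congr 1
  rw [classes, Finset.image_image]
  exact Finset.image_congr (fun C _ => core_himg hl C)

end Core

section Delta

variable {N1 N2 : Network s} {a b : Cplx s}

/-- Case: both endpoints old, not linked. -/
theorem delta_Ib
    (hl : ∀ C D, N2.linked C D ↔ N1.linked C D ∨ (N1.linked C a ∧ N1.linked b D) ∨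
      (N1.linked C b ∧ N1.linked a D))
    (h2c : N2.complexes = insert a (insert b N1.complexes))
    (ha : a ∈ N1.complexes) (hb : b ∈ N1.complexes) (hab : ¬N1.linked a b) :
    N2.numComplexes = N1.numComplexes ∧ N2.numLinkage + 1 = N1.numLinkage := by
  have hcc : N2.complexes = N1.complexes := by
    rw [h2c, Finset.insert_eq_self.mpr hb, Finset.insert_eq_self.mpr ha]
  constructor
  · rw [numComplexes, numComplexes, hcc]
  · -- classes
    set X := N2.linkageClass a with hX
    set A := N1.linkageClass a with hA
    set B := N1.linkageClass b with hB
    have hAB : A ≠ B := fun h => hab ((class_eq_iff N1).mp h)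
    have hAmem : A ∈ N1.classes := Finset.mem_image_of_mem _ ha
    have hBmem : B ∈ N1.classes := Finset.mem_image_of_mem _ hb
    -- a fact used repeatedly: stable classes are not X
    have hstab : ∀ C ∈ N1.complexes, N1.linkageClass C ≠ A → N1.linkageClass C ≠ B →
        N1.linkageClass C ≠ X := by
      intro C _ hCA hCB hCX
      have hca : ¬N1.linked C a := fun h => hCA ((class_eq_iff N1).mpr h)
      have hcb : ¬N1.linked C b := fun h => hCB ((class_eq_iff N1).mpr h)
      have : N2.linkageClass C = X := by rw [core_cls_stable hl hca hcb]; exact hCX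
      have hlink : N2.linked C a := (class_eq_iff N2).mp this
      rcases (hl C a).mp hlink with h | ⟨h1, _⟩ | ⟨h1, _⟩
      · exact hca h
      · exact hca h1
      · exact hcb h1
    have himg : N1.classes.image (gmap N1 N2 a b)
        = insert X ((N1.classes.erase A).erase B) := by
      ext S
      simp only [Finset.mem_image, Finset.mem_insert, Finset.mem_erase]
      constructor
      · rintro ⟨T, hT, rfl⟩
        unfold gmap
        by_cases h : T = A ∨ T = B
        · rw [if_pos h]; exact Or.inl rfl
        · push_neg at h
          rw [if_neg (not_or.mpr h)]
          exact Or.inr ⟨h.2, h.1, hT⟩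
      · rintro (rfl | ⟨hSB, hSA, hS⟩)
        · exact ⟨A, hAmem, by unfold gmap; rw [if_pos (Or.inl rfl)]⟩
        · exact ⟨S, hS, by unfold gmap; rw [if_neg (not_or.mpr ⟨hSA, hSB⟩)]⟩
    have hXnot : X ∉ (N1.classes.erase A).erase B := by
      intro hX'
      have hXmem : X ∈ N1.classes := Finset.mem_of_mem_erase (Finset.mem_of_mem_erase hX')
      have hXB : X ≠ B := Finset.ne_of_mem_erase hX'
      have hXA : X ≠ A := Finset.ne_of_mem_erase (Finset.mem_of_mem_erase hX')
      obtain ⟨C, hC, hCeq⟩ := Finset.mem_image.mp hXmem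
      exact hstab C hC (hCeq.trans_ne hXA) (hCeq.trans_ne hXB) hCeq
    have hXin : X ∈ N1.classes.image (gmap N1 N2 a b) :=
      himg ▸ Finset.mem_insert_self _ _
    have hcls : N2.classes = N1.classes.image (gmap N1 N2 a b) := by
      rw [core_classes hl h2c, ← core_cls_ab hl]
      rw [Finset.insert_eq_self.mpr hXin, Finset.insert_eq_self.mpr hXin]
    rw [numLinkage_eq, numLinkage_eq, hcls, himg]
    rw [Finset.card_insert_of_notMem hXnot]
    rw [Finset.card_erase_of_mem (Finset.mem_erase.mpr ⟨Ne.symm hAB, hBmem⟩),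
      Finset.card_erase_of_mem hAmem]
    have h2le : 2 ≤ N1.classes.card :=
      Finset.one_lt_card.mpr ⟨A, hAmem, B, hBmem, hAB⟩
    omega

/-- Case: `a` is new, `b` is old. -/
theorem delta_II
    (hl : ∀ C D, N2.linked C D ↔ N1.linked C D ∨ (N1.linked C a ∧ N1.linked b D) ∨
      (N1.linked C b ∧ N1.linked a D))
    (h2c : N2.complexes = insert a (insert b N1.complexes))
    (ha : a ∉ N1.complexes) (hb : b ∈ N1.complexes) :
    N2.numComplexes = N1.numComplexes + 1 ∧ N2.numLinkage = N1.numLinkage := by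
  have hanb : ∀ C, C ∈ N1.complexes → ¬N1.linked C a := by
    intro C hC h
    rw [linked_eq_of_not_mem' ha] at h
    exact ha (h ▸ hC)
  constructor
  · rw [numComplexes, numComplexes, h2c, Finset.insert_eq_self.mpr hb,
      Finset.card_insert_of_notMem ha]
  · have hclsB : gmap N1 N2 a b (N1.linkageClass b) = N2.linkageClass a := by
      unfold gmap; rw [if_pos (Or.inr rfl)]
    have hXin : N2.linkageClass a ∈ N1.classes.image (gmap N1 N2 a b) :=
      hclsB ▸ Finset.mem_image_of_mem _ (Finset.mem_image_of_mem _ hb)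
    have hcls : N2.classes = N1.classes.image (gmap N1 N2 a b) := by
      rw [core_classes hl h2c, ← core_cls_ab hl]
      rw [Finset.insert_eq_self.mpr hXin, Finset.insert_eq_self.mpr hXin]
    have hinj : Set.InjOn (gmap N1 N2 a b) ↑N1.classes := by
      intro S hS T hT h
      obtain ⟨C, hC, rfl⟩ := Finset.mem_image.mp (Finset.mem_coe.mp hS)
      obtain ⟨D, hD, rfl⟩ := Finset.mem_image.mp (Finset.mem_coe.mp hT)
      have hCA : N1.linkageClass C ≠ N1.linkageClass a :=
        fun h' => hanb C hC ((class_eq_iff N1).mp h')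
      have hDA : N1.linkageClass D ≠ N1.linkageClass a :=
        fun h' => hanb D hD ((class_eq_iff N1).mp h')
      -- key: a stable class can't equal N2.linkageClass a
      have hkey : ∀ E, E ∈ N1.complexes → ¬N1.linked E b →
          N1.linkageClass E ≠ N2.linkageClass a := by
        intro E hE hEb h'
        have hst : N2.linkageClass E = N1.linkageClass E :=
          core_cls_stable hl (hanb E hE) hEb
        have : N2.linked a E := N2.linked_symm_s8 ((class_eq_iff N2).mp (hst.trans h'))
        rcases (hl a E).mp this with h'' | ⟨_, h3⟩ | ⟨_, h3⟩
        · exact hanb E hE (N1.linked_symm_s8 h'')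
        · exact hEb (N1.linked_symm_s8 h3)
        · exact hanb E hE (N1.linked_symm_s8 h3)
      unfold gmap at h
      by_cases hCB : N1.linkageClass C = N1.linkageClass b
      · rw [if_pos (Or.inr hCB)] at h
        by_cases hDB : N1.linkageClass D = N1.linkageClass b
        · rw [hCB, hDB]
        · rw [if_neg (not_or.mpr ⟨hDA, hDB⟩)] at h
          exact absurd h.symm
            (hkey D hD (fun h' => hDB ((class_eq_iff N1).mpr h')))
      · rw [if_neg (not_or.mpr ⟨hCA, hCB⟩)] at h
        by_cases hDB : N1.linkageClass D = N1.linkageClass b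
        · rw [if_pos (Or.inr hDB)] at h
          exact absurd h (hkey C hC (fun h' => hCB ((class_eq_iff N1).mpr h')))
        · rw [if_neg (not_or.mpr ⟨hDA, hDB⟩)] at h
          exact h
    rw [numLinkage_eq, numLinkage_eq, hcls, Finset.card_image_of_injOn hinj]

/-- Case: both endpoints new. -/
theorem delta_III
    (hl : ∀ C D, N2.linked C D ↔ N1.linked C D ∨ (N1.linked C a ∧ N1.linked b D) ∨
      (N1.linked C b ∧ N1.linked a D))
    (h2c : N2.complexes = insert a (insert b N1.complexes))
    (hab : a ≠ b) (ha : a ∉ N1.complexes) (hb : b ∉ N1.complexes) :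
    N2.numComplexes = N1.numComplexes + 2 ∧ N2.numLinkage = N1.numLinkage + 1 := by
  have hanb : ∀ C, C ∈ N1.complexes → ¬N1.linked C a := by
    intro C hC h; rw [linked_eq_of_not_mem' ha] at h; exact ha (h ▸ hC)
  have hbnb : ∀ C, C ∈ N1.complexes → ¬N1.linked C b := by
    intro C hC h; rw [linked_eq_of_not_mem' hb] at h; exact hb (h ▸ hC)
  constructor
  · rw [numComplexes, numComplexes, h2c,
      Finset.card_insert_of_notMem (by simp [Finset.mem_insert, hab, ha]),
      Finset.card_insert_of_notMem hb]
  · have himg : N1.classes.image (gmap N1 N2 a b) = N1.classes := by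
      have heq : ∀ S ∈ N1.classes, gmap N1 N2 a b S = id S := by
        intro S hS
        obtain ⟨C, hC, rfl⟩ := Finset.mem_image.mp hS
        unfold gmap
        exact if_neg (not_or.mpr ⟨fun h => hanb C hC ((class_eq_iff N1).mp h),
          fun h => hbnb C hC ((class_eq_iff N1).mp h)⟩)
      rw [Finset.image_congr heq, Finset.image_id]
    have hXnot : N2.linkageClass a ∉ N1.classes := by
      intro hX
      obtain ⟨C, hC, hCeq⟩ := Finset.mem_image.mp hX
      have hst : N2.linkageClass C = N1.linkageClass C :=
        core_cls_stable hl (hanb C hC) (hbnb C hC)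
      have : N2.linked a C := N2.linked_symm_s8 ((class_eq_iff N2).mp (hst.trans hCeq))
      rcases (hl a C).mp this with h'' | ⟨_, h3⟩ | ⟨_, h3⟩
      · exact hanb C hC (N1.linked_symm_s8 h'')
      · exact hbnb C hC (N1.linked_symm_s8 h3)
      · rw [linked_eq_of_not_mem ha] at h3
        exact ha (h3 ▸ hC)
    have hcls : N2.classes = insert (N2.linkageClass a) N1.classes := by
      rw [core_classes hl h2c, ← core_cls_ab hl, himg, Finset.insert_idem]
    rw [numLinkage_eq, numLinkage_eq, hcls, Finset.card_insert_of_notMem hXnot]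

/-- Case: both endpoints old and linked. -/
theorem delta_Ia
    (hl : ∀ C D, N2.linked C D ↔ N1.linked C D ∨ (N1.linked C a ∧ N1.linked b D) ∨
      (N1.linked C b ∧ N1.linked a D))
    (h2c : N2.complexes = insert a (insert b N1.complexes))
    (ha : a ∈ N1.complexes) (hb : b ∈ N1.complexes) (hab : N1.linked a b) :
    N2.numComplexes = N1.numComplexes ∧ N2.numLinkage = N1.numLinkage := by
  have hcc : N2.complexes = N1.complexes := by
    rw [h2c, Finset.insert_eq_self.mpr hb, Finset.insert_eq_self.mpr ha]
  have hlink : ∀ C D, N2.linked C D ↔ N1.linked C D := by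
    intro C D
    rw [hl C D]
    constructor
    · rintro (h | ⟨h1, h3⟩ | ⟨h1, h3⟩)
      · exact h
      · exact N1.linked_trans h1 (N1.linked_trans hab h3)
      · exact N1.linked_trans h1 (N1.linked_trans (N1.linked_symm_s8 hab) h3)
    · exact Or.inl
  have hclseq : N2.linkageClass = N1.linkageClass := by
    funext C; ext D; simp only [linkageClass, Set.mem_setOf_eq, hlink]
  constructor
  · rw [numComplexes, numComplexes, hcc]
  · rw [numLinkage_eq, numLinkage_eq, classes, classes, hcc, hclseq]

/-- Main delta computation. -/
theorem delta_core
    (hab : a ≠ b)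
    (hl : ∀ C D, N2.linked C D ↔ N1.linked C D ∨ (N1.linked C a ∧ N1.linked b D) ∨
      (N1.linked C b ∧ N1.linked a D))
    (h2c : N2.complexes = insert a (insert b N1.complexes)) :
    (N2.numComplexes : ℤ) - N2.numLinkage = (N1.numComplexes : ℤ) - N1.numLinkage +
      (if a ∈ N1.complexes ∧ b ∈ N1.complexes ∧ N1.linked a b then 0 else 1) := by
  have hl' : ∀ C D, N2.linked C D ↔ N1.linked C D ∨ (N1.linked C b ∧ N1.linked a D) ∨
      (N1.linked C a ∧ N1.linked b D) := fun C D => (hl C D).trans (by tauto)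
  have h2c' : N2.complexes = insert b (insert a N1.complexes) := by
    rw [h2c, Finset.insert_comm]
  by_cases ha : a ∈ N1.complexes
  · by_cases hb : b ∈ N1.complexes
    · by_cases hlab : N1.linked a b
      · obtain ⟨e1, e2⟩ := delta_Ia hl h2c ha hb hlab
        rw [if_pos ⟨ha, hb, hlab⟩, e1, e2]; ring
      · obtain ⟨e1, e2⟩ := delta_Ib hl h2c ha hb hlab
        rw [if_neg (by tauto), e1]
        omega
    · obtain ⟨e1, e2⟩ := delta_II hl' h2c' hb ha
      rw [if_neg (by tauto), e1, e2]; push_cast; ring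
  · by_cases hb : b ∈ N1.complexes
    · obtain ⟨e1, e2⟩ := delta_II hl h2c ha hb
      rw [if_neg (by tauto), e1, e2]; push_cast; ring
    · obtain ⟨e1, e2⟩ := delta_III hl h2c hab ha hb
      rw [if_neg (by tauto), e1, e2]; push_cast; ring

end Delta

theorem insert_delta {N1 N2 : Network s} {a b : Cplx s} (hab : a ≠ b)
    (h2 : N2.reactions = insert (a, b) N1.reactions) :
    (N2.numComplexes : ℤ) - N2.numLinkage = (N1.numComplexes : ℤ) - N1.numLinkage +
      (if a ∈ N1.complexes ∧ b ∈ N1.complexes ∧ N1.linked a b then 0 else 1) :=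
  delta_core hab (linked2_iff h2) (complexes2 h2)

theorem empty_vals {N : Network s} (h : N.reactions = ∅) :
    N.numComplexes = 0 ∧ N.numLinkage = 0 := by
  have hc : N.complexes = ∅ := by simp [complexes, h]
  exact ⟨by simp [numComplexes, hc], by simp [numLinkage_eq, classes, hc]⟩

end Network

open scoped Classical

section Transfer

variable {s : ℕ} {Dn : Network s} {U : Network (s + 1)}
  (h : Dn.reactions = U.reactions.image fun r => (proj r.1, proj r.2))

include h

theorem transfer_mem {C : Cplx (s + 1)} (hC : C ∈ U.complexes) :
    proj C ∈ Dn.complexes := by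
  rw [Network.mem_complexes] at hC ⊢
  obtain ⟨r, hr, h1 | h1⟩ := hC
  · exact ⟨(proj r.1, proj r.2), by rw [h]; exact Finset.mem_image_of_mem _ hr,
      Or.inl (by rw [h1])⟩
  · exact ⟨(proj r.1, proj r.2), by rw [h]; exact Finset.mem_image_of_mem _ hr,
      Or.inr (by rw [h1])⟩

theorem transfer_linked {C D : Cplx (s + 1)} (hCD : U.linked C D) :
    Dn.linked (proj C) (proj D) := by
  refine Relation.ReflTransGen.lift proj (fun E F hEF => ?_) _ _ hCD
  rcases hEF with h1 | h1
  · exact Or.inl (by rw [h]; exact Finset.mem_image_of_mem _ h1)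
  · exact Or.inr (by rw [h]; exact Finset.mem_image_of_mem _ h1)

end Transfer

theorem stmt8' {s : ℕ} (N : Network s) (N' : Network (s + 1))
    (hproj : N.reactions = N'.reactions.image fun r => (proj r.1, proj r.2)) :
    (N'.numLinkage : ℤ) - N.numLinkage ≤ (N'.numComplexes : ℤ) - N.numComplexes := by
  classical
  have key : ∀ R : Finset (Cplx (s + 1) × Cplx (s + 1)), R ⊆ N'.reactions →
      ∀ (U : Network (s + 1)) (Dn : Network s), U.reactions = R →
      Dn.reactions = R.image (fun r => (proj r.1, proj r.2)) →
      (Dn.numComplexes : ℤ) - Dn.numLinkage ≤ (U.numComplexes : ℤ) - U.numLinkage := by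
    intro R
    induction R using Finset.induction_on with
    | empty =>
      intro _ U Dn hU hDn
      obtain ⟨e1, e2⟩ := Network.empty_vals hU
      obtain ⟨e3, e4⟩ := Network.empty_vals (by simpa using hDn)
      simp [e1, e2, e3, e4]
    | insert r R hr ih =>
      intro hsub U Dn hU hDn
      obtain ⟨a, b⟩ := r
      have hsub' : R ⊆ N'.reactions := fun x hx => hsub (Finset.mem_insert_of_mem hx)
      have hmemN' : (a, b) ∈ N'.reactions := hsub (Finset.mem_insert_self _ _)
      have hab : a ≠ b := N'.ne _ hmemN'
      have habd : proj a ≠ proj b := by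
        have hm : ((proj a, proj b) : Cplx s × Cplx s) ∈ N.reactions := by
          rw [hproj]; exact Finset.mem_image_of_mem _ hmemN'
        exact N.ne _ hm
      let U1 : Network (s + 1) := ⟨R, fun q hq => N'.ne q (hsub' hq)⟩
      let Dn1 : Network s := ⟨R.image (fun r => (proj r.1, proj r.2)), fun q hq =>
        N.ne q (by rw [hproj]; exact Finset.image_subset_image hsub' hq)⟩
      have ihle := ih hsub' U1 Dn1 rfl rfl
      have hU2 : U.reactions = insert (a, b) U1.reactions := hU
      have hDn2 : Dn.reactions = insert (proj a, proj b) Dn1.reactions := by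
        rw [hDn, Finset.image_insert]
      have dU := Network.insert_delta hab hU2
      have dD := Network.insert_delta habd hDn2
      have hh : Dn1.reactions = U1.reactions.image fun r => (proj r.1, proj r.2) := rfl
      by_cases hP : a ∈ U1.complexes ∧ b ∈ U1.complexes ∧ U1.linked a b
      · have hQ : proj a ∈ Dn1.complexes ∧ proj b ∈ Dn1.complexes ∧
            Dn1.linked (proj a) (proj b) :=
          ⟨transfer_mem hh hP.1, transfer_mem hh hP.2.1, transfer_linked hh hP.2.2⟩
        rw [if_pos hP] at dU
        rw [if_pos hQ] at dD
        linarith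
      · rw [if_neg hP] at dU
        by_cases hQ : proj a ∈ Dn1.complexes ∧ proj b ∈ Dn1.complexes ∧
            Dn1.linked (proj a) (proj b)
        · rw [if_pos hQ] at dD; linarith
        · rw [if_neg hQ] at dD; linarith
  have h := key N'.reactions (le_refl _) N' N rfl hproj
  linarith

theorem stmt8 {s : ℕ} (N : Network s) (N' : Network (s + 1))
    (hproj : N.reactions = N'.reactions.image fun r => (proj r.1, proj r.2))
    (hcard : N'.reactions.card = N.reactions.card) :
    (N'.numLinkage : ℤ) - N.numLinkage ≤ (N'.numComplexes : ℤ) - N.numComplexes :=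
  stmt8' N N' hproj
end

section
/- Let N' be obtained from a network N by an E5 operation: adding m new pairs of reversible reactions C(j) <-> D(j) (j = 1,...,m) involving m+i new species appearing only in the new reactions, such that the submatrix of the stoichiometric matrix of N' formed by the rows of the new species has rank m. Then delta(N') = delta(N). -/
open Submodule

/-- Extend a complex on the old species by zeros on the `k` new species. -/
def ext {s k : ℕ} (C : Cplx s) : Cplx (s + k) := Fin.append C 0

/-- Projection onto the coordinates of the `k` new species. -/
def projNew {s k : ℕ} (v : Fin (s + k) → ℝ) : Fin k → ℝ := fun j => v (Fin.natAdd s j)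

namespace E5Aux

open Network

variable {n : ℕ}

lemma step_symm (M : Network n) : Symmetric M.step := fun _ _ h => h.symm

lemma linked_symm (M : Network n) : Symmetric M.linked :=
  haveI : Std.Symm M.step := ⟨fun _ _ h => step_symm M h⟩
  fun a b h => Std.Symm.symm (r := Relation.ReflTransGen M.step) a b h

lemma mem_complexes_of_step {M : Network n} {X Y : Cplx n} (h : M.step X Y) :
    X ∈ M.complexes ∧ Y ∈ M.complexes := by
  simp only [Network.complexes, Finset.mem_union, Finset.mem_image]
  rcases h with h | h
  · exact ⟨Or.inl ⟨(X, Y), h, rfl⟩, Or.inr ⟨(X, Y), h, rfl⟩⟩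
  · exact ⟨Or.inr ⟨(Y, X), h, rfl⟩, Or.inl ⟨(Y, X), h, rfl⟩⟩

lemma linked_cases {M : Network n} {X Y : Cplx n} (h : M.linked X Y) :
    X = Y ∨ (X ∈ M.complexes ∧ Y ∈ M.complexes) := by
  induction h with
  | refl => exact Or.inl rfl
  | tail _ hstep ih =>
    rcases ih with rfl | ⟨h1, _⟩
    · exact Or.inr (mem_complexes_of_step hstep)
    · exact Or.inr ⟨h1, (mem_complexes_of_step hstep).2⟩

lemma sub_mem_stoich {M : Network n} {X Y : Cplx n} (h : M.linked X Y) :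
    toR Y - toR X ∈ M.stoichSubspace := by
  induction h with
  | refl => simpa using Submodule.zero_mem _
  | @tail b c _ hstep ih =>
    have h2 : toR c - toR b ∈ M.stoichSubspace := by
      rcases hstep with hr | hr
      · exact Submodule.subset_span ⟨(b, c), hr, rfl⟩
      · have : toR b - toR c ∈ M.stoichSubspace :=
          Submodule.subset_span ⟨(c, b), hr, rfl⟩
        simpa [neg_sub] using Submodule.neg_mem _ this
    have := Submodule.add_mem _ h2 ih
    simpa [sub_add_sub_cancel] using this

lemma mem_class_iff {M : Network n} {X Y : Cplx n} :
    Y ∈ M.linkageClass X ↔ M.linked X Y := Iff.rfl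

lemma class_eq_of_linked {M : Network n} {X Y : Cplx n} (h : M.linked X Y) :
    M.linkageClass X = M.linkageClass Y := by
  ext Z
  exact ⟨fun hz => ((linked_symm M) h).trans hz, fun hz => h.trans hz⟩

lemma linked_of_class_eq {M : Network n} {X Y : Cplx n}
    (h : M.linkageClass X = M.linkageClass Y) : M.linked X Y := by
  have : Y ∈ M.linkageClass Y := Relation.ReflTransGen.refl
  rw [← h] at this
  exact this

lemma class_subset_complexes {M : Network n} {X : Cplx n} (hX : X ∈ M.complexes) :
    M.linkageClass X ⊆ ↑M.complexes := by
  intro Y hY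
  rcases linked_cases hY with rfl | ⟨_, h2⟩
  · exact hX
  · exact h2

def classesOf (M : Network n) : Set (Set (Cplx n)) :=
  {S | ∃ X ∈ M.complexes, S = M.linkageClass X}

lemma numLinkage_eq (M : Network n) : M.numLinkage = (classesOf M).ncard := rfl

lemma classesOf_finite (M : Network n) : (classesOf M).Finite := by
  have : classesOf M = M.linkageClass '' ↑M.complexes := by
    ext S
    simp [classesOf, Set.image, eq_comm]
  rw [this]
  exact M.complexes.finite_toSet.image _

lemma class_subset_of_mem {M : Network n} {S : Set (Cplx n)} (hS : S ∈ classesOf M) :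
    S ⊆ ↑M.complexes := by
  obtain ⟨X, hX, rfl⟩ := hS
  exact class_subset_complexes hX

-- ============ adding one reversible pair ============

variable {M M' : Network n} {C D : Cplx n}

lemma step_add_iff (h' : M'.reactions = M.reactions ∪ {(C, D), (D, C)}) (X Y : Cplx n) :
    M'.step X Y ↔ M.step X Y ∨ (X = C ∧ Y = D) ∨ (X = D ∧ Y = C) := by
  simp only [Network.step, h', Finset.mem_union, Finset.mem_insert, Finset.mem_singleton,
    Prod.mk.injEq]
  tauto

lemma linked_add_iff (h' : M'.reactions = M.reactions ∪ {(C, D), (D, C)}) (X Y : Cplx n) :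
    M'.linked X Y ↔
      M.linked X Y ∨ (M.linked X C ∧ M.linked D Y) ∨ (M.linked X D ∧ M.linked C Y) := by
  constructor
  · intro hl
    induction hl with
    | refl => exact Or.inl Relation.ReflTransGen.refl
    | @tail b c _ hbc ih =>
      rw [step_add_iff h'] at hbc
      rcases hbc with hst | ⟨rfl, rfl⟩ | ⟨rfl, rfl⟩
      · rcases ih with h | ⟨h1, h2⟩ | ⟨h1, h2⟩
        · exact Or.inl (h.tail hst)
        · exact Or.inr (Or.inl ⟨h1, h2.tail hst⟩)
        · exact Or.inr (Or.inr ⟨h1, h2.tail hst⟩)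
      · rcases ih with h | ⟨h1, h2⟩ | ⟨h1, h2⟩
        · exact Or.inr (Or.inl ⟨h, Relation.ReflTransGen.refl⟩)
        · exact Or.inr (Or.inl ⟨h1, Relation.ReflTransGen.refl⟩)
        · exact Or.inl h1
      · rcases ih with h | ⟨h1, h2⟩ | ⟨h1, h2⟩
        · exact Or.inr (Or.inr ⟨h, Relation.ReflTransGen.refl⟩)
        · exact Or.inl h1
        · exact Or.inr (Or.inr ⟨h1, Relation.ReflTransGen.refl⟩)
  · intro hl
    have mono : ∀ {A B : Cplx n}, M.linked A B → M'.linked A B := by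
      intro A B hAB
      induction hAB with
      | refl => exact Relation.ReflTransGen.refl
      | tail _ hst ih => exact ih.tail (by rw [step_add_iff h']; exact Or.inl hst)
    have eCD : M'.linked C D :=
      Relation.ReflTransGen.single (by rw [step_add_iff h']; tauto)
    have eDC : M'.linked D C :=
      Relation.ReflTransGen.single (by rw [step_add_iff h']; tauto)
    rcases hl with h | ⟨h1, h2⟩ | ⟨h1, h2⟩
    · exact mono h
    · exact ((mono h1).trans eCD).trans (mono h2)
    · exact ((mono h1).trans eDC).trans (mono h2)

lemma complexes_add (h' : M'.reactions = M.reactions ∪ {(C, D), (D, C)}) :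
    M'.complexes = M.complexes ∪ {C, D} := by
  ext X
  simp only [Network.complexes, h', Finset.mem_union, Finset.mem_image, Finset.mem_insert,
    Finset.mem_singleton, Prod.ext_iff]
  constructor
  · rintro ((⟨r, hr | hr, h⟩) | (⟨r, hr | hr, h⟩)) <;>
      [skip; skip; skip; skip] <;>
      first
        | (exact Or.inl (Or.inl ⟨r, hr, h⟩))
        | (exact Or.inl (Or.inr ⟨r, hr, h⟩))
        | (rcases hr with ⟨h1, h2⟩ | ⟨h1, h2⟩ <;> subst h <;> simp [← h1, ← h2])
  · rintro ((⟨r, hr, h⟩ | ⟨r, hr, h⟩) | hx | hx)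
    · exact Or.inl ⟨r, Or.inl hr, h⟩
    · exact Or.inr ⟨r, Or.inl hr, h⟩
    · exact Or.inl ⟨(C, D), Or.inr (Or.inl ⟨rfl, rfl⟩), hx.symm⟩
    · exact Or.inr ⟨(C, D), Or.inr (Or.inl ⟨rfl, rfl⟩), hx.symm⟩

lemma class_add_of_not (h' : M'.reactions = M.reactions ∪ {(C, D), (D, C)}) {X : Cplx n}
    (hx1 : ¬M.linked X C) (hx2 : ¬M.linked X D) :
    M'.linkageClass X = M.linkageClass X := by
  ext Y
  simp only [Network.linkageClass, Set.mem_setOf_eq, linked_add_iff h']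
  tauto

lemma class_add_of_linkC (h' : M'.reactions = M.reactions ∪ {(C, D), (D, C)}) {X : Cplx n}
    (hx : M.linked X C) :
    M'.linkageClass X = M.linkageClass C ∪ M.linkageClass D := by
  ext Y
  simp only [Network.linkageClass, Set.mem_setOf_eq, linked_add_iff h', Set.mem_union]
  constructor
  · rintro (h | ⟨_, h2⟩ | ⟨_, h2⟩)
    · exact Or.inl (((linked_symm M) hx).trans h)
    · exact Or.inr h2
    · exact Or.inl h2
  · rintro (h | h)
    · exact Or.inl (hx.trans h)
    · exact Or.inr (Or.inl ⟨hx, h⟩)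

lemma class_add_of_linkD (h' : M'.reactions = M.reactions ∪ {(C, D), (D, C)}) {X : Cplx n}
    (hx : M.linked X D) :
    M'.linkageClass X = M.linkageClass C ∪ M.linkageClass D := by
  ext Y
  simp only [Network.linkageClass, Set.mem_setOf_eq, linked_add_iff h', Set.mem_union]
  constructor
  · rintro (h | ⟨_, h2⟩ | ⟨_, h2⟩)
    · exact Or.inr (((linked_symm M) hx).trans h)
    · exact Or.inr h2
    · exact Or.inl h2
  · rintro (h | h)
    · exact Or.inr (Or.inr ⟨hx, h⟩)
    · exact Or.inl (hx.trans h)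

lemma singleton_class {M : Network n} {D : Cplx n} (hD : D ∉ M.complexes) :
    M.linkageClass D = {D} := by
  ext Y
  simp only [mem_class_iff, Set.mem_singleton_iff]
  constructor
  · intro h
    rcases linked_cases h with h | ⟨h1, _⟩
    · exact h.symm
    · exact absurd h1 hD
  · rintro rfl
    exact Relation.ReflTransGen.refl

lemma count_add_a (h' : M'.reactions = M.reactions ∪ {(C, D), (D, C)})
    (hC : C ∈ M.complexes) (hD : D ∈ M.complexes) (hnl : ¬M.linked C D) :
    (M'.numComplexes : ℤ) - M'.numLinkage = (M.numComplexes : ℤ) - M.numLinkage + 1 := by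
  classical
  set κC := M.linkageClass C with hκC
  set κD := M.linkageClass D with hκD
  have finA := classesOf_finite M
  have ha : κC ∈ classesOf M := ⟨C, hC, rfl⟩
  have hb : κD ∈ classesOf M := ⟨D, hD, rfl⟩
  have hab : κC ≠ κD := fun e => hnl (linked_of_class_eq e)
  have hu : κC ∪ κD ∉ classesOf M := by
    rintro ⟨X, _, hSX⟩
    have hXC : M.linked X C := by
      have : C ∈ M.linkageClass X := by
        rw [← hSX]; exact Set.mem_union_left _ Relation.ReflTransGen.refl
      exact this
    have hXD : D ∈ M.linkageClass X := by
      rw [← hSX]; exact Set.mem_union_right _ Relation.ReflTransGen.refl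
    exact hnl (((linked_symm M) hXC).trans hXD)
  have hcls : classesOf M' = (classesOf M \ {κC, κD}) ∪ {κC ∪ κD} := by
    ext S
    constructor
    · rintro ⟨X, hX, rfl⟩
      by_cases h1 : M.linked X C
      · right
        rw [Set.mem_singleton_iff, class_add_of_linkC h' h1, hκC, hκD]
      by_cases h2 : M.linked X D
      · right
        rw [Set.mem_singleton_iff, class_add_of_linkD h' h2, hκC, hκD]
      · left
        have h1' : X ≠ C := fun e => h1 (by rw [e]; exact Relation.ReflTransGen.refl)
        have h2' : X ≠ D := fun e => h2 (by rw [e]; exact Relation.ReflTransGen.refl)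
        have hXm : X ∈ M.complexes := by
          rw [complexes_add h'] at hX
          simp only [Finset.mem_union, Finset.mem_insert, Finset.mem_singleton] at hX
          tauto
        rw [class_add_of_not h' h1 h2]
        refine ⟨⟨X, hXm, rfl⟩, ?_⟩
        simp only [Set.mem_insert_iff, Set.mem_singleton_iff, hκC, hκD]
        push_neg
        exact ⟨fun e => h1 (linked_of_class_eq e), fun e => h2 (linked_of_class_eq e)⟩
    · rintro (⟨hS, hS2⟩ | hS)
      · obtain ⟨X, hX, rfl⟩ := hS
        simp only [Set.mem_insert_iff, Set.mem_singleton_iff] at hS2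
        push_neg at hS2
        have h1 : ¬M.linked X C := fun e => hS2.1 (by rw [hκC]; exact class_eq_of_linked e)
        have h2 : ¬M.linked X D := fun e => hS2.2 (by rw [hκD]; exact class_eq_of_linked e)
        refine ⟨X, ?_, (class_add_of_not h' h1 h2).symm⟩
        rw [complexes_add h']
        exact Finset.mem_union_left _ hX
      · rw [Set.mem_singleton_iff] at hS
        refine ⟨C, ?_, ?_⟩
        · rw [complexes_add h']
          exact Finset.mem_union_left _ hC
        · rw [hS, class_add_of_linkC h' Relation.ReflTransGen.refl, hκC, hκD]
  have hfin2 : (classesOf M \ {κC, κD}).Finite := finA.diff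
  have c2 : (classesOf M).ncard = (classesOf M \ {κC, κD}).ncard + 2 := by
    have hAeq : classesOf M = insert κC (insert κD (classesOf M \ {κC, κD})) := by
      ext S
      simp only [Set.mem_insert_iff, Set.mem_diff, Set.mem_singleton_iff]
      tauto
    conv_lhs => rw [hAeq]
    rw [Set.ncard_insert_of_notMem (by simp [hab]) (hfin2.insert _),
      Set.ncard_insert_of_notMem (by simp) hfin2]
  have c1 : (classesOf M').ncard = (classesOf M \ {κC, κD}).ncard + 1 := by
    rw [hcls, Set.union_singleton,
      Set.ncard_insert_of_notMem (fun hmem => hu hmem.1) hfin2]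
  have hc : M'.numComplexes = M.numComplexes := by
    unfold Network.numComplexes
    rw [complexes_add h', Finset.union_eq_left.mpr]
    intro x hx
    simp only [Finset.mem_insert, Finset.mem_singleton] at hx
    rcases hx with rfl | rfl
    · exact hC
    · exact hD
  rw [numLinkage_eq, numLinkage_eq, hc, c1, c2]
  push_cast
  ring

lemma count_add_b (h' : M'.reactions = M.reactions ∪ {(C, D), (D, C)})
    (hC : C ∈ M.complexes) (hD : D ∉ M.complexes) :
    (M'.numComplexes : ℤ) - M'.numLinkage = (M.numComplexes : ℤ) - M.numLinkage + 1 := by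
  classical
  set κC := M.linkageClass C with hκC
  have hDclass : M.linkageClass D = {D} := singleton_class hD
  have finA := classesOf_finite M
  have ha : κC ∈ classesOf M := ⟨C, hC, rfl⟩
  have hu : κC ∪ {D} ∉ classesOf M := fun hmem =>
    hD (class_subset_of_mem hmem (Set.mem_union_right _ rfl))
  have hcls : classesOf M' = (classesOf M \ {κC}) ∪ {κC ∪ {D}} := by
    ext S
    constructor
    · rintro ⟨X, hX, rfl⟩
      by_cases h1 : M.linked X C
      · right
        rw [Set.mem_singleton_iff, class_add_of_linkC h' h1, hκC, hDclass]
      by_cases h2 : M.linked X D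
      · right
        rw [Set.mem_singleton_iff, class_add_of_linkD h' h2, hκC, hDclass]
      · left
        have h1' : X ≠ C := fun e => h1 (by rw [e]; exact Relation.ReflTransGen.refl)
        have h2' : X ≠ D := fun e => h2 (by rw [e]; exact Relation.ReflTransGen.refl)
        have hXm : X ∈ M.complexes := by
          rw [complexes_add h'] at hX
          simp only [Finset.mem_union, Finset.mem_insert, Finset.mem_singleton] at hX
          tauto
        rw [class_add_of_not h' h1 h2]
        refine ⟨⟨X, hXm, rfl⟩, ?_⟩
        simp only [Set.mem_singleton_iff, hκC]
        exact fun e => h1 (linked_of_class_eq e)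
    · rintro (⟨hS, hS2⟩ | hS)
      · obtain ⟨X, hX, rfl⟩ := hS
        rw [Set.mem_singleton_iff] at hS2
        have h1 : ¬M.linked X C := fun e => hS2 (by rw [hκC]; exact class_eq_of_linked e)
        have h2 : ¬M.linked X D := fun e => hD ((linked_cases e).elim (fun h => h ▸ hX) And.right)
        refine ⟨X, ?_, (class_add_of_not h' h1 h2).symm⟩
        rw [complexes_add h']
        exact Finset.mem_union_left _ hX
      · rw [Set.mem_singleton_iff] at hS
        refine ⟨C, ?_, ?_⟩
        · rw [complexes_add h']
          exact Finset.mem_union_left _ hC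
        · rw [hS, class_add_of_linkC h' Relation.ReflTransGen.refl, hκC, hDclass]
  have c2 : (classesOf M \ {κC}).ncard + 1 = (classesOf M).ncard :=
    Set.ncard_diff_singleton_add_one ha finA
  have c1 : (classesOf M').ncard = (classesOf M \ {κC}).ncard + 1 := by
    rw [hcls, Set.union_singleton,
      Set.ncard_insert_of_notMem (fun hmem => hu hmem.1) finA.diff]
  have hc : M'.numComplexes = M.numComplexes + 1 := by
    unfold Network.numComplexes
    rw [complexes_add h']
    have huni : M.complexes ∪ {C, D} = insert D M.complexes := by
      ext x
      simp only [Finset.mem_union, Finset.mem_insert, Finset.mem_singleton]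
      constructor
      · rintro (hx | rfl | rfl)
        · exact Or.inr hx
        · exact Or.inr hC
        · exact Or.inl rfl
      · rintro (rfl | hx)
        · exact Or.inr (Or.inr rfl)
        · exact Or.inl hx
    rw [huni, Finset.card_insert_of_notMem hD]
  rw [numLinkage_eq, numLinkage_eq, hc, c1, ← c2]
  push_cast
  ring

lemma count_add_c (h' : M'.reactions = M.reactions ∪ {(C, D), (D, C)})
    (hC : C ∉ M.complexes) (hD : D ∉ M.complexes) (hne : C ≠ D) :
    (M'.numComplexes : ℤ) - M'.numLinkage = (M.numComplexes : ℤ) - M.numLinkage + 1 := by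
  classical
  have hCclass : M.linkageClass C = {C} := singleton_class hC
  have hDclass : M.linkageClass D = {D} := singleton_class hD
  have finA := classesOf_finite M
  have hu : ({C, D} : Set (Cplx n)) ∉ classesOf M := fun hmem =>
    hC (class_subset_of_mem hmem (Set.mem_insert _ _))
  have notlinkC : ∀ {X : Cplx n}, X ∈ M.complexes → ¬M.linked X C :=
    fun {X} hX e => hC ((linked_cases e).elim (fun h => h ▸ hX) And.right)
  have notlinkD : ∀ {X : Cplx n}, X ∈ M.complexes → ¬M.linked X D :=
    fun {X} hX e => hD ((linked_cases e).elim (fun h => h ▸ hX) And.right)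
  have hcls : classesOf M' = classesOf M ∪ {({C, D} : Set (Cplx n))} := by
    ext S
    constructor
    · rintro ⟨X, hX, rfl⟩
      rw [complexes_add h'] at hX
      simp only [Finset.mem_union, Finset.mem_insert, Finset.mem_singleton] at hX
      rcases hX with hX | hX | hX
      · left
        rw [class_add_of_not h' (notlinkC hX) (notlinkD hX)]
        exact ⟨X, hX, rfl⟩
      · right
        rw [Set.mem_singleton_iff, class_add_of_linkC h' (by rw [hX]; exact Relation.ReflTransGen.refl), hCclass, hDclass,
          Set.singleton_union]
      · right
        rw [Set.mem_singleton_iff, class_add_of_linkD h' (by rw [hX]; exact Relation.ReflTransGen.refl), hCclass, hDclass,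
          Set.singleton_union]
    · rintro (⟨X, hX, rfl⟩ | hS)
      · refine ⟨X, ?_, (class_add_of_not h' (notlinkC hX) (notlinkD hX)).symm⟩
        rw [complexes_add h']
        exact Finset.mem_union_left _ hX
      · rw [Set.mem_singleton_iff] at hS
        refine ⟨C, ?_, ?_⟩
        · rw [complexes_add h']
          exact Finset.mem_union_right _ (Finset.mem_insert_self _ _)
        · rw [hS, class_add_of_linkC h' Relation.ReflTransGen.refl, hCclass, hDclass,
            Set.singleton_union]
  have c1 : (classesOf M').ncard = (classesOf M).ncard + 1 := by
    rw [hcls, Set.union_singleton, Set.ncard_insert_of_notMem hu finA]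
  have hc : M'.numComplexes = M.numComplexes + 2 := by
    unfold Network.numComplexes
    rw [complexes_add h']
    have huni : M.complexes ∪ {C, D} = insert C (insert D M.complexes) := by
      ext x
      simp only [Finset.mem_union, Finset.mem_insert, Finset.mem_singleton]
      tauto
    rw [huni, Finset.card_insert_of_notMem (by
        simp only [Finset.mem_insert]
        push_neg
        exact ⟨hne, hC⟩),
      Finset.card_insert_of_notMem hD]
  rw [numLinkage_eq, numLinkage_eq, hc, c1]
  push_cast
  ring

lemma add_pair (h' : M'.reactions = M.reactions ∪ {(C, D), (D, C)})
    (hne : C ≠ D) (hnl : ¬M.linked C D) :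
    (M'.numComplexes : ℤ) - M'.numLinkage = (M.numComplexes : ℤ) - M.numLinkage + 1 := by
  by_cases hC : C ∈ M.complexes <;> by_cases hD : D ∈ M.complexes
  · exact count_add_a h' hC hD hnl
  · exact count_add_b h' hC hD
  · have h'' : M'.reactions = M.reactions ∪ {(D, C), (C, D)} := by rw [h', Finset.pair_comm]
    exact count_add_b h'' hD hC
  · exact count_add_c h' hC hD hne

-- ============ embedding of the old network ============

section Embed

variable {s k : ℕ}

lemma ext_left {s k : ℕ} (A : Cplx s) (j : Fin s) :
    ext (k := k) A (Fin.castAdd k j) = A j := Fin.append_left _ _ _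

lemma ext_right {s k : ℕ} (A : Cplx s) (j : Fin k) :
    ext (k := k) A (Fin.natAdd s j) = 0 := Fin.append_right _ _ _

lemma ext_inj : Function.Injective (ext (s := s) (k := k)) := by
  intro A B hAB
  funext j
  have := congrFun hAB (Fin.castAdd k j)
  rwa [ext_left, ext_left] at this

variable {N : Network s} {M0 : Network (s + k)}

lemma complexes_embed (hM0 : M0.reactions = N.reactions.image fun r => (ext r.1, ext r.2)) :
    M0.complexes = N.complexes.image ext := by
  unfold Network.complexes
  rw [hM0, Finset.image_image, Finset.image_image, Finset.image_union,
    Finset.image_image, Finset.image_image]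
  rfl

lemma linked_embed_back (hM0 : M0.reactions = N.reactions.image fun r => (ext r.1, ext r.2))
    {A B : Cplx s} (h : N.linked A B) : M0.linked (ext A) (ext B) := by
  induction h with
  | refl => exact Relation.ReflTransGen.refl
  | @tail b c _ hbc ih =>
    refine ih.tail ?_
    rcases hbc with hr | hr
    · exact Or.inl (by rw [hM0]; exact Finset.mem_image.mpr ⟨(b, c), hr, rfl⟩)
    · exact Or.inr (by rw [hM0]; exact Finset.mem_image.mpr ⟨(c, b), hr, rfl⟩)

lemma linked_embed_forward
    (hM0 : M0.reactions = N.reactions.image fun r => (ext r.1, ext r.2))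
    {A : Cplx s} {Y : Cplx (s + k)} (h : M0.linked (ext A) Y) :
    ∃ B, N.linked A B ∧ Y = ext B := by
  induction h with
  | refl => exact ⟨A, Relation.ReflTransGen.refl, rfl⟩
  | @tail b c _ hbc ih =>
    obtain ⟨B, hB, rfl⟩ := ih
    rcases hbc with hr | hr
    · rw [hM0] at hr
      obtain ⟨r, hrmem, hre⟩ := Finset.mem_image.mp hr
      have e1 : ext r.1 = ext B := congrArg Prod.fst hre
      have e2 : ext r.2 = c := congrArg Prod.snd hre
      refine ⟨r.2, hB.tail (Or.inl ?_), e2.symm⟩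
      rw [← ext_inj e1]
      exact hrmem
    · rw [hM0] at hr
      obtain ⟨r, hrmem, hre⟩ := Finset.mem_image.mp hr
      have e1 : ext r.1 = c := congrArg Prod.fst hre
      have e2 : ext r.2 = ext B := congrArg Prod.snd hre
      refine ⟨r.1, hB.tail (Or.inr ?_), e1.symm⟩
      rw [← ext_inj e2]
      exact hrmem

lemma class_embed (hM0 : M0.reactions = N.reactions.image fun r => (ext r.1, ext r.2))
    (A : Cplx s) : M0.linkageClass (ext A) = ext '' N.linkageClass A := by
  ext Y
  constructor
  · intro hY
    obtain ⟨B, hB, rfl⟩ := linked_embed_forward hM0 hY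
    exact ⟨B, hB, rfl⟩
  · rintro ⟨B, hB, rfl⟩
    exact linked_embed_back hM0 hB

lemma classesOf_embed (hM0 : M0.reactions = N.reactions.image fun r => (ext r.1, ext r.2)) :
    classesOf M0 = (Set.image ext) '' classesOf N := by
  ext S
  constructor
  · rintro ⟨X, hX, rfl⟩
    rw [complexes_embed hM0] at hX
    obtain ⟨A, hA, rfl⟩ := Finset.mem_image.mp hX
    exact ⟨N.linkageClass A, ⟨A, hA, rfl⟩, (class_embed hM0 A).symm⟩
  · rintro ⟨T, ⟨A, hA, rfl⟩, rfl⟩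
    exact ⟨ext A, by rw [complexes_embed hM0]; exact Finset.mem_image_of_mem _ hA,
      (class_embed hM0 A).symm⟩

lemma numComplexes_embed (hM0 : M0.reactions = N.reactions.image fun r => (ext r.1, ext r.2)) :
    M0.numComplexes = N.numComplexes := by
  unfold Network.numComplexes
  rw [complexes_embed hM0, Finset.card_image_of_injective _ ext_inj]

lemma numLinkage_embed (hM0 : M0.reactions = N.reactions.image fun r => (ext r.1, ext r.2)) :
    M0.numLinkage = N.numLinkage := by
  rw [numLinkage_eq, numLinkage_eq, classesOf_embed hM0]
  exact Set.ncard_image_of_injective _ (Set.image_injective.mpr ext_inj)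

end Embed

lemma network_eq {M M' : Network n} (h : M.reactions = M'.reactions) : M = M' := by
  cases M
  cases M'
  simp only at h
  subst h
  rfl

-- ============ linear algebra ============

section LinAlg

variable {s k : ℕ}

def extL (s k : ℕ) : (Fin s → ℝ) →ₗ[ℝ] (Fin (s + k) → ℝ) where
  toFun v := Fin.append v 0
  map_add' u w := by
    funext x
    induction x using Fin.addCases with
    | left j => simp [Fin.append_left]
    | right j => simp [Fin.append_right]
  map_smul' c u := by
    funext x
    induction x using Fin.addCases with
    | left j => simp [Fin.append_left]
    | right j => simp [Fin.append_right]

lemma extL_apply (v : Fin s → ℝ) : extL s k v = Fin.append v 0 := rfl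

lemma extL_inj : Function.Injective (extL s k) := by
  intro u w hw
  funext j
  have := congrFun hw (Fin.castAdd k j)
  rw [extL_apply, extL_apply, Fin.append_left, Fin.append_left] at this
  exact this

def projL (s k : ℕ) : (Fin (s + k) → ℝ) →ₗ[ℝ] (Fin k → ℝ) :=
  LinearMap.funLeft ℝ ℝ (Fin.natAdd s)

lemma projL_apply (v : Fin (s + k) → ℝ) : projL s k v = projNew v := rfl

lemma projL_extL (v : Fin s → ℝ) : projL s k (extL s k v) = 0 := by
  funext j
  show Fin.append v 0 (Fin.natAdd s j) = (0 : Fin k → ℝ) j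
  rw [Fin.append_right]

lemma toR_ext (A : Cplx s) : toR (ext (k := k) A) = extL s k (toR A) := by
  funext x
  induction x using Fin.addCases with
  | left j =>
    show ((ext (k := k) A (Fin.castAdd k j) : ℕ) : ℝ) = Fin.append (toR A) 0 (Fin.castAdd k j)
    rw [ext_left, Fin.append_left]
    rfl
  | right j =>
    show ((ext (k := k) A (Fin.natAdd s j) : ℕ) : ℝ) = Fin.append (toR A) 0 (Fin.natAdd s j)
    rw [ext_right, Fin.append_right]
    simp

end LinAlg

-- ============ the tower of networks ============

section Tower

variable {s k m : ℕ}

def bigR (N : Network s) (C D : Fin m → Cplx (s + k)) (t : ℕ) :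
    Finset (Cplx (s + k) × Cplx (s + k)) :=
  ((N.reactions.image fun r => (ext r.1, ext r.2))
      ∪ ((Finset.univ.filter fun j : Fin m => (j : ℕ) < t).image fun j => (C j, D j)))
    ∪ ((Finset.univ.filter fun j : Fin m => (j : ℕ) < t).image fun j => (D j, C j))

lemma bigR_zero (N : Network s) (C D : Fin m → Cplx (s + k)) :
    bigR N C D 0 = N.reactions.image fun r => (ext r.1, ext r.2) := by
  simp [bigR]

lemma bigR_succ (N : Network s) (C D : Fin m → Cplx (s + k)) {t : ℕ} (ht : t < m) :
    bigR N C D (t + 1) =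
      bigR N C D t ∪ {(C ⟨t, ht⟩, D ⟨t, ht⟩), (D ⟨t, ht⟩, C ⟨t, ht⟩)} := by
  classical
  have hfil : (Finset.univ.filter fun j : Fin m => (j : ℕ) < t + 1)
      = insert ⟨t, ht⟩ (Finset.univ.filter fun j : Fin m => (j : ℕ) < t) := by
    ext j
    simp only [Finset.mem_filter, Finset.mem_insert, Finset.mem_univ, true_and, Fin.ext_iff]
    omega
  unfold bigR
  rw [hfil, Finset.image_insert, Finset.image_insert]
  ext x
  simp only [Finset.mem_union, Finset.mem_insert, Finset.mem_singleton]
  tauto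

lemma bigR_sub {N : Network s} {N' : Network (s + k)} {C D : Fin m → Cplx (s + k)}
    (h : N'.reactions = ((N.reactions.image fun r => (ext r.1, ext r.2))
        ∪ (Finset.univ.image fun j => (C j, D j)))
        ∪ (Finset.univ.image fun j => (D j, C j)))
    (t : ℕ) : bigR N C D t ⊆ N'.reactions := by
  rw [h]
  intro x hx
  simp only [bigR, Finset.mem_union, Finset.mem_image, Finset.mem_filter, Finset.mem_univ,
    true_and] at hx ⊢
  rcases hx with (hx | ⟨j, hj, he⟩) | ⟨j, hj, he⟩
  · exact Or.inl (Or.inl hx)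
  · exact Or.inl (Or.inr ⟨j, he⟩)
  · exact Or.inr ⟨j, he⟩

lemma bigR_last {N : Network s} {N' : Network (s + k)} {C D : Fin m → Cplx (s + k)}
    (h : N'.reactions = ((N.reactions.image fun r => (ext r.1, ext r.2))
        ∪ (Finset.univ.image fun j => (C j, D j)))
        ∪ (Finset.univ.image fun j => (D j, C j))) :
    bigR N C D m = N'.reactions := by
  unfold bigR
  rw [Finset.filter_true_of_mem fun j _ => j.isLt, h]

lemma not_linked_step {N : Network s} {C D : Fin m → Cplx (s + k)}
    (hindep : LinearIndependent ℝ (fun j => projNew (toR (D j) - toR (C j))))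
    {t : ℕ} (ht : t < m) {M : Network (s + k)} (hM : M.reactions = bigR N C D t) :
    ¬M.linked (C ⟨t, ht⟩) (D ⟨t, ht⟩) := by
  intro hl
  have hmem := sub_mem_stoich hl
  have hle : Submodule.map (projL s k) M.stoichSubspace ≤
      Submodule.span ℝ ((fun j => projNew (toR (D j) - toR (C j))) ''
        {j : Fin m | (j : ℕ) < t}) := by
    unfold Network.stoichSubspace
    rw [Submodule.map_span]
    apply Submodule.span_le.mpr
    rintro x ⟨w, ⟨r, hr, rfl⟩, rfl⟩
    rw [hM] at hr
    simp only [bigR, Finset.mem_union, Finset.mem_image, Finset.mem_filter, Finset.mem_univ,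
      true_and] at hr
    rcases hr with (⟨a, _, hae⟩ | ⟨j, hj, hje⟩) | ⟨j, hj, hje⟩
    · have e1 : r.1 = ext a.1 := by rw [← hae]
      have e2 : r.2 = ext a.2 := by rw [← hae]
      have hz : projL s k (toR r.2 - toR r.1) = 0 := by
        rw [e1, e2, toR_ext, toR_ext, ← map_sub, projL_extL]
      rw [SetLike.mem_coe, hz]
      exact Submodule.zero_mem _
    · have e1 : r.1 = C j := by rw [← hje]
      have e2 : r.2 = D j := by rw [← hje]
      rw [SetLike.mem_coe, e1, e2, projL_apply]
      exact Submodule.subset_span ⟨j, hj, rfl⟩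
    · have e1 : r.1 = D j := by rw [← hje]
      have e2 : r.2 = C j := by rw [← hje]
      have hneg : projL s k (toR r.2 - toR r.1) =
          -(projNew (toR (D j) - toR (C j))) := by
        rw [e1, e2, ← neg_sub (toR (D j)) (toR (C j)), map_neg, projL_apply]
      rw [SetLike.mem_coe, hneg]
      exact Submodule.neg_mem _ (Submodule.subset_span ⟨j, hj, rfl⟩)
  have hmem2 : (fun j => projNew (toR (D j) - toR (C j))) ⟨t, ht⟩ ∈
      Submodule.span ℝ ((fun j => projNew (toR (D j) - toR (C j))) ''
        {j : Fin m | (j : ℕ) < t}) := by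
    apply hle
    refine ⟨toR (D ⟨t, ht⟩) - toR (C ⟨t, ht⟩), hmem, ?_⟩
    rw [projL_apply]
  exact hindep.notMem_span_image (by simp) hmem2

lemma rank_eq {N : Network s} {N' : Network (s + k)} {C D : Fin m → Cplx (s + k)}
    (h : N'.reactions = ((N.reactions.image fun r => (ext r.1, ext r.2))
        ∪ (Finset.univ.image fun j => (C j, D j)))
        ∪ (Finset.univ.image fun j => (D j, C j)))
    (hindep : LinearIndependent ℝ (fun j => projNew (toR (D j) - toR (C j)))) :
    N'.rank = N.rank + m := by
  classical
  set E := extL s k with hE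
  set W := Submodule.map E N.stoichSubspace with hW
  set U := Submodule.span ℝ (Set.range fun j => toR (D j) - toR (C j)) with hU
  have hsp : N'.stoichSubspace = W ⊔ U := by
    apply le_antisymm
    · apply Submodule.span_le.mpr
      rintro w ⟨r, hr, rfl⟩
      rw [h] at hr
      simp only [Finset.mem_union, Finset.mem_image, Finset.mem_univ, true_and] at hr
      rcases hr with (⟨a, ha, hae⟩ | ⟨j, hje⟩) | ⟨j, hje⟩
      · have e1 : r.1 = ext a.1 := by rw [← hae]
        have e2 : r.2 = ext a.2 := by rw [← hae]
        apply Submodule.mem_sup_left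
        rw [e1, e2, toR_ext, toR_ext, ← map_sub]
        exact Submodule.mem_map_of_mem (Submodule.subset_span ⟨a, ha, rfl⟩)
      · have e1 : r.1 = C j := by rw [← hje]
        have e2 : r.2 = D j := by rw [← hje]
        apply Submodule.mem_sup_right
        rw [e1, e2, hU]
        exact Submodule.subset_span ⟨j, rfl⟩
      · have e1 : r.1 = D j := by rw [← hje]
        have e2 : r.2 = C j := by rw [← hje]
        apply Submodule.mem_sup_right
        rw [e1, e2, hU]
        have : toR (C j) - toR (D j) = -(toR (D j) - toR (C j)) := by rw [neg_sub]
        rw [this]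
        exact Submodule.neg_mem _ (Submodule.subset_span ⟨j, rfl⟩)
    · apply sup_le
      · rw [hW]
        unfold Network.stoichSubspace
        rw [Submodule.map_span]
        apply Submodule.span_le.mpr
        rintro x ⟨w, ⟨a, ha, rfl⟩, rfl⟩
        apply Submodule.subset_span
        refine ⟨(ext a.1, ext a.2), ?_, ?_⟩
        · rw [h]
          exact Finset.mem_union_left _
            (Finset.mem_union_left _ (Finset.mem_image_of_mem _ ha))
        · rw [map_sub, hE, ← toR_ext, ← toR_ext]
      · rw [hU]
        apply Submodule.span_le.mpr
        rintro x ⟨j, rfl⟩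
        apply Submodule.subset_span
        refine ⟨(C j, D j), ?_, rfl⟩
        rw [h]
        exact Finset.mem_union_left _
          (Finset.mem_union_right _ (Finset.mem_image_of_mem _ (Finset.mem_univ _)))
  have hWπ : ∀ x ∈ W, projL s k x = 0 := by
    rintro x ⟨y, -, rfl⟩
    exact projL_extL y
  have hdisj : W ⊓ U = ⊥ := by
    rw [eq_bot_iff]
    rintro x ⟨hxW, hxU⟩
    rw [hU] at hxU
    obtain ⟨c, hc⟩ := (mem_span_range_iff_exists_fun ℝ).mp hxU
    have hzero : ∑ j, c j • (fun j => projNew (toR (D j) - toR (C j))) j = 0 := by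
      have hπ := hWπ x hxW
      calc ∑ j, c j • (fun j => projNew (toR (D j) - toR (C j))) j
          = projL s k (∑ j, c j • (toR (D j) - toR (C j))) := by
            rw [map_sum]
            refine Finset.sum_congr rfl fun j _ => ?_
            rw [map_smul, projL_apply]
        _ = projL s k x := by rw [hc]
        _ = 0 := hπ
    have hc0 : ∀ j, c j = 0 := Fintype.linearIndependent_iff.mp hindep c hzero
    have hx0 : x = 0 := by
      rw [← hc]
      simp [hc0]
    simp [hx0]
  have hvind : LinearIndependent ℝ (fun j => toR (D j) - toR (C j)) :=
    LinearIndependent.of_comp (projL s k) hindep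
  have finU : Module.finrank ℝ U = m := by
    rw [hU, finrank_span_eq_card hvind, Fintype.card_fin]
  have finW : Module.finrank ℝ W = N.rank := by
    rw [hW]
    exact ((Submodule.equivMapOfInjective E extL_inj N.stoichSubspace).finrank_eq).symm
  have hsum := Submodule.finrank_sup_add_finrank_inf_eq W U
  rw [hdisj, finrank_bot, add_zero, finU, finW] at hsum
  show Module.finrank ℝ N'.stoichSubspace = N.rank + m
  rw [hsp, hsum]

end Tower

end E5Aux

theorem stmt11 {s m i : ℕ} (hm : 0 < m) (N : Network s) (N' : Network (s + (m + i)))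
    (C D : Fin m → Cplx (s + (m + i)))
    (h : N'.reactions = (N.reactions.image fun r => (ext r.1, ext r.2))
        ∪ (Finset.univ.image fun j => (C j, D j))
        ∪ (Finset.univ.image fun j => (D j, C j)))
    (hrank : Module.finrank ℝ (Submodule.span ℝ
        (Set.range fun j => projNew (toR (D j) - toR (C j)))) = m) :
    N'.deficiency = N.deficiency := by
  classical
  have hindep : LinearIndependent ℝ (fun j => projNew (toR (D j) - toR (C j))) := by
    rw [linearIndependent_iff_card_eq_finrank_span, Fintype.card_fin]
    exact hrank.symm
  have hrk : N'.rank = N.rank + m := E5Aux.rank_eq h hindep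
  let Mt : ℕ → Network (s + (m + i)) :=
    fun t => ⟨E5Aux.bigR N C D t, fun r hr => N'.ne r (E5Aux.bigR_sub h t hr)⟩
  have hMt : ∀ t, (Mt t).reactions = E5Aux.bigR N C D t := fun t => rfl
  have key : ∀ t, t ≤ m →
      ((Mt t).numComplexes : ℤ) - (Mt t).numLinkage
        = (N.numComplexes : ℤ) - N.numLinkage + t := by
    intro t
    induction t with
    | zero =>
      intro _
      have h0 : (Mt 0).reactions = N.reactions.image fun r => (ext r.1, ext r.2) := by
        rw [hMt, E5Aux.bigR_zero]
      rw [E5Aux.numComplexes_embed h0, E5Aux.numLinkage_embed h0]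
      simp
    | succ t ih =>
      intro ht
      have ht' : t < m := ht
      have hstep : (Mt (t + 1)).reactions =
          (Mt t).reactions ∪ {(C ⟨t, ht'⟩, D ⟨t, ht'⟩), (D ⟨t, ht'⟩, C ⟨t, ht'⟩)} := by
        rw [hMt, hMt, E5Aux.bigR_succ N C D ht']
      have hne : C ⟨t, ht'⟩ ≠ D ⟨t, ht'⟩ := by
        apply N'.ne (C ⟨t, ht'⟩, D ⟨t, ht'⟩)
        rw [h]
        exact Finset.mem_union_left _
          (Finset.mem_union_right _ (Finset.mem_image_of_mem _ (Finset.mem_univ _)))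
      have hnl := E5Aux.not_linked_step hindep ht' (hMt t)
      rw [E5Aux.add_pair hstep hne hnl, ih (le_of_lt ht')]
      push_cast
      ring
  have hmN : Mt m = N' := E5Aux.network_eq ((hMt m).trans (E5Aux.bigR_last h))
  have hcl : (N'.numComplexes : ℤ) - N'.numLinkage
      = (N.numComplexes : ℤ) - N.numLinkage + m := by
    rw [← hmN]
    exact key m le_rfl
  unfold Network.deficiency
  rw [hrk]
  push_cast
  linarith [hcl]
end

section
/- Let N' be obtained from a network N by an E6 operation: splitting m reactions C(j) -> D(j) into C(j) -> Z(j) -> D(j) with new complexes Z(j) involving m+i new species, such that the new-species rows of the stoichiometric matrix of N' have rank m. Then delta(N') = delta(N). -/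
open Submodule

open Classical

namespace E6Aux
variable {s k : ℕ}

def Lz (s k : ℕ) : (Fin s → ℝ) →ₗ[ℝ] (Fin (s + k) → ℝ) where
  toFun v := Fin.append v 0
  map_add' v w := by
    funext x
    refine Fin.addCases (fun l => ?_) (fun l => ?_) x <;>
      simp [Fin.append_left, Fin.append_right]
  map_smul' c v := by
    funext x
    refine Fin.addCases (fun l => ?_) (fun l => ?_) x <;>
      simp [Fin.append_left, Fin.append_right]

def Pn (s k : ℕ) : (Fin (s + k) → ℝ) →ₗ[ℝ] (Fin k → ℝ) where
  toFun v := projNew v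
  map_add' := fun _ _ => rfl
  map_smul' := fun _ _ => rfl

lemma ext_def (C : Cplx s) : ext (k := k) C = Fin.append C 0 := rfl

lemma toR_ext (C : Cplx s) : toR (ext (k := k) C) = Lz s k (toR C) := by
  funext x
  refine Fin.addCases (fun l => ?_) (fun l => ?_) x <;>
    simp [toR, ext_def, Lz, Fin.append_left, Fin.append_right]

lemma Pn_Lz (v : Fin s → ℝ) : Pn s k (Lz s k v) = 0 := by
  funext l; show Fin.append v 0 (Fin.natAdd s l) = 0; simp [Fin.append_right]

lemma projNew_eq_Pn (v : Fin (s + k) → ℝ) : projNew v = Pn s k v := rfl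

lemma projNew_toR_ext (C : Cplx s) : projNew (toR (ext (k := k) C)) = 0 := by
  rw [projNew_eq_Pn, toR_ext, Pn_Lz]

lemma Lz_injective : Function.Injective (Lz s k) := by
  intro v w hvw
  funext l
  have := congrFun hvw (Fin.castAdd k l)
  simpa [Lz, Fin.append_left] using this

lemma ext_injective : Function.Injective (ext (s := s) (k := k)) := by
  intro v w hvw
  funext l
  have := congrFun hvw (Fin.castAdd k l)
  simpa [ext_def, Fin.append_left] using this

lemma linked_symm {N : Network s} {C D : Cplx s} (hl : N.linked C D) : N.linked D C :=
  haveI : Std.Symm N.step := ⟨fun _ _ hs => hs.elim Or.inr Or.inl⟩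
  Relation.ReflTransGen.symmetric.symm _ _ hl

lemma linkageClass_eq_iff {N : Network s} {C D : Cplx s} :
    N.linkageClass C = N.linkageClass D ↔ N.linked C D := by
  constructor
  · intro hcd
    have : D ∈ N.linkageClass D := Relation.ReflTransGen.refl
    rw [← hcd] at this
    exact this
  · intro hl
    ext E
    constructor
    · exact fun hE => Relation.ReflTransGen.trans (linked_symm hl) hE
    · exact fun hE => Relation.ReflTransGen.trans hl hE

lemma card_image_eq_of_ker {α β γ : Type*} [DecidableEq β] [DecidableEq γ] (A : Finset α)
    (f : α → β) (g : α → γ) (hfg : ∀ x y, f x = f y ↔ g x = g y) :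
    (A.image f).card = (A.image g).card := by
  classical
  refine Finset.card_bij (fun b hb => g (Finset.mem_image.1 hb).choose) ?_ ?_ ?_
  · intro b hb
    obtain ⟨hA, _⟩ := (Finset.mem_image.1 hb).choose_spec
    exact Finset.mem_image.2 ⟨_, hA, rfl⟩
  · intro b1 h1 b2 h2 he
    obtain ⟨_, hf1⟩ := (Finset.mem_image.1 h1).choose_spec
    obtain ⟨_, hf2⟩ := (Finset.mem_image.1 h2).choose_spec
    rw [← hf1, ← hf2]
    exact (hfg _ _).2 he
  · intro c hc
    obtain ⟨x, hx, hgx⟩ := Finset.mem_image.1 hc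
    have hfx : f x ∈ A.image f := Finset.mem_image.2 ⟨x, hx, rfl⟩
    refine ⟨f x, hfx, ?_⟩
    obtain ⟨_, hf⟩ := (Finset.mem_image.1 hfx).choose_spec
    rw [← hgx]
    exact (hfg _ _).1 hf

open Classical in
lemma numLinkage_eq_card_image (N : Network s) :
    N.numLinkage = (N.complexes.image N.linkageClass).card := by
  classical
  rw [Network.numLinkage, ← Set.ncard_coe_finset, Finset.coe_image]
  congr 1
  ext S
  simp only [Set.mem_setOf_eq, Set.mem_image, Finset.mem_coe]
  constructor
  · rintro ⟨C, hC, rfl⟩; exact ⟨C, hC, rfl⟩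
  · rintro ⟨C, hC, rfl⟩; exact ⟨C, hC, rfl⟩

noncomputable def phi {s k m : ℕ} (Z : Fin m → Cplx (s + k)) (split : Fin m → Cplx s × Cplx s)
    (x : Cplx (s + k)) : Cplx s :=
  if hx : ∃ j, Z j = x then (split hx.choose).1 else fun l => x (Fin.castAdd k l)

lemma phi_ext {m : ℕ} (Z : Fin m → Cplx (s + k)) (split : Fin m → Cplx s × Cplx s)
    (hZ : ∀ j C, Z j ≠ ext C) (C : Cplx s) : phi Z split (ext C) = C := by
  rw [phi, dif_neg (by rintro ⟨j, hj⟩; exact hZ j C hj)]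
  funext l
  show Fin.append C 0 (Fin.castAdd k l) = C l
  rw [Fin.append_left]

lemma phi_Z {m : ℕ} (Z : Fin m → Cplx (s + k)) (split : Fin m → Cplx s × Cplx s)
    (hZinj : Function.Injective Z) (j : Fin m) : phi Z split (Z j) = (split j).1 := by
  have hx : ∃ j', Z j' = Z j := ⟨j, rfl⟩
  rw [phi, dif_pos hx, hZinj hx.choose_spec]

end E6Aux

open E6Aux

theorem stmt13 {s m i : ℕ} (hm : 0 < m) (N : Network s) (N' : Network (s + (m + i)))
    (split : Fin m → Cplx s × Cplx s) (hmem : ∀ j, split j ∈ N.reactions)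
    (hinj : Function.Injective split)
    (Z : Fin m → Cplx (s + (m + i)))
    (h : N'.reactions
        = ((N.reactions \ Finset.univ.image split).image fun r => (ext r.1, ext r.2))
          ∪ (Finset.univ.image fun j => (ext (split j).1, Z j))
          ∪ (Finset.univ.image fun j => (Z j, ext (split j).2)))
    (hrank : Module.finrank ℝ (Submodule.span ℝ
        {w : Fin (m + i) → ℝ | ∃ r ∈ N'.reactions, w = projNew (toR r.2 - toR r.1)}) = m) :
    N'.deficiency = N.deficiency := by
  classical
  have hmemN' : ∀ p : Cplx (s + (m + i)) × Cplx (s + (m + i)), p ∈ N'.reactions ↔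
      (∃ r, (r ∈ N.reactions ∧ ¬ ∃ j, split j = r) ∧ (ext r.1, ext r.2) = p) ∨
      (∃ j, (ext (split j).1, Z j) = p) ∨ (∃ j, (Z j, ext (split j).2) = p) := by
    intro p
    rw [h]
    simp [Finset.mem_union, Finset.mem_image, Finset.mem_sdiff]
  have hcx : N'.complexes = N.complexes.image ext ∪ Finset.univ.image Z := by
    ext x
    simp only [Network.complexes, Finset.mem_union, Finset.mem_image, Finset.mem_univ, true_and]
    constructor
    · rintro (⟨p, hp, rfl⟩ | ⟨p, hp, rfl⟩) <;>
        rcases (hmemN' p).1 hp with ⟨r, ⟨hr, _⟩, rfl⟩ | ⟨j, rfl⟩ | ⟨j, rfl⟩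
      · exact Or.inl ⟨r.1, Or.inl ⟨r, hr, rfl⟩, rfl⟩
      · exact Or.inl ⟨(split j).1, Or.inl ⟨split j, hmem j, rfl⟩, rfl⟩
      · exact Or.inr ⟨j, rfl⟩
      · exact Or.inl ⟨r.2, Or.inr ⟨r, hr, rfl⟩, rfl⟩
      · exact Or.inr ⟨j, rfl⟩
      · exact Or.inl ⟨(split j).2, Or.inr ⟨split j, hmem j, rfl⟩, rfl⟩
    · rintro (⟨C, ⟨r, hr, rfl⟩ | ⟨r, hr, rfl⟩, rfl⟩ | ⟨j, rfl⟩)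
      · by_cases hs : ∃ j, split j = r
        · obtain ⟨j, rfl⟩ := hs
          exact Or.inl ⟨(ext (split j).1, Z j), (hmemN' _).2 (Or.inr (Or.inl ⟨j, rfl⟩)), rfl⟩
        · exact Or.inl ⟨(ext r.1, ext r.2), (hmemN' _).2 (Or.inl ⟨r, ⟨hr, hs⟩, rfl⟩), rfl⟩
      · by_cases hs : ∃ j, split j = r
        · obtain ⟨j, rfl⟩ := hs
          exact Or.inr ⟨(Z j, ext (split j).2), (hmemN' _).2 (Or.inr (Or.inr ⟨j, rfl⟩)), rfl⟩
        · exact Or.inr ⟨(ext r.1, ext r.2), (hmemN' _).2 (Or.inl ⟨r, ⟨hr, hs⟩, rfl⟩), rfl⟩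
      · exact Or.inr ⟨(ext (split j).1, Z j), (hmemN' _).2 (Or.inr (Or.inl ⟨j, rfl⟩)), rfl⟩
  set u : Fin m → (Fin (m + i) → ℝ) := fun j => projNew (toR (Z j)) with hu_def
  have hspan_u : Submodule.span ℝ {w : Fin (m + i) → ℝ |
        ∃ r ∈ N'.reactions, w = projNew (toR r.2 - toR r.1)}
      = Submodule.span ℝ (Set.range u) := by
    apply le_antisymm
    · rw [Submodule.span_le]
      rintro w ⟨r, hr, rfl⟩
      rcases (hmemN' r).1 hr with ⟨q, ⟨hq, _⟩, rfl⟩ | ⟨j, rfl⟩ | ⟨j, rfl⟩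
      · show projNew (toR (ext q.2) - toR (ext q.1)) ∈ _
        have h0 : projNew (toR (ext (k := m + i) q.2) - toR (ext q.1)) = 0 := by
          rw [projNew_eq_Pn, map_sub, toR_ext, toR_ext, Pn_Lz, Pn_Lz, sub_zero]
        rw [h0]
        exact Submodule.zero_mem _
      · show projNew (toR (Z j) - toR (ext (split j).1)) ∈ _
        have h0 : projNew (toR (Z j) - toR (ext (k := m + i) (split j).1)) = u j := by
          rw [projNew_eq_Pn, map_sub, toR_ext, Pn_Lz, sub_zero]; rfl
        rw [h0]
        exact Submodule.subset_span (Set.mem_range_self j)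
      · show projNew (toR (ext (split j).2) - toR (Z j)) ∈ _
        have h0 : projNew (toR (ext (k := m + i) (split j).2) - toR (Z j)) = -u j := by
          rw [projNew_eq_Pn, map_sub, toR_ext, Pn_Lz, zero_sub]; rfl
        rw [h0]
        exact Submodule.neg_mem _ (Submodule.subset_span (Set.mem_range_self j))
    · rw [Submodule.span_le]
      rintro w ⟨j, rfl⟩
      apply Submodule.subset_span
      refine ⟨(ext (split j).1, Z j), (hmemN' _).2 (Or.inr (Or.inl ⟨j, rfl⟩)), ?_⟩
      show u j = projNew (toR (Z j) - toR (ext (split j).1))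
      rw [projNew_eq_Pn, map_sub, toR_ext, Pn_Lz, sub_zero]; rfl
  have hufin : Module.finrank ℝ (Submodule.span ℝ (Set.range u)) = m := by
    rw [← hspan_u]; exact hrank
  have hu_li : LinearIndependent ℝ u := by
    rw [linearIndependent_iff_card_eq_finrank_span]
    simp only [Set.finrank, Fintype.card_fin]
    exact hufin.symm
  have hu_ne : ∀ j, u j ≠ 0 := fun j => hu_li.ne_zero j
  have hZinj : Function.Injective Z := by
    intro a b hab
    apply hu_li.injective
    show projNew (toR (Z a)) = projNew (toR (Z b))
    rw [hab]
  have hZnotext : ∀ (j : Fin m) (C : Cplx s), Z j ≠ ext C := by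
    intro j C hZC
    apply hu_ne j
    show projNew (toR (Z j)) = 0
    rw [hZC, projNew_toR_ext]
  have hCcard : N'.numComplexes = N.numComplexes + m := by
    rw [Network.numComplexes, hcx, Finset.card_union_of_disjoint, Network.numComplexes,
      Finset.card_image_of_injective _ ext_injective, Finset.card_image_of_injective _ hZinj,
      Finset.card_univ, Fintype.card_fin]
    rw [Finset.disjoint_right]
    rintro x hx hx'
    obtain ⟨j, _, rfl⟩ := Finset.mem_image.1 hx
    obtain ⟨C, _, hC⟩ := Finset.mem_image.1 hx'
    exact hZnotext j C hC.symm
  -- linkage classes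
  have hstep_up : ∀ C D : Cplx s, N.step C D → N'.linked (ext C) (ext D) := by
    intro C D hCD
    rcases hCD with hCD | hCD
    · by_cases hs : ∃ j, split j = (C, D)
      · obtain ⟨j, hj⟩ := hs
        have h1 : N'.step (ext C) (Z j) :=
          Or.inl ((hmemN' _).2 (Or.inr (Or.inl ⟨j, by rw [hj]⟩)))
        have h2 : N'.step (Z j) (ext D) :=
          Or.inl ((hmemN' _).2 (Or.inr (Or.inr ⟨j, by rw [hj]⟩)))
        exact Relation.ReflTransGen.head h1 (Relation.ReflTransGen.single h2)
      · exact Relation.ReflTransGen.single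
          (Or.inl ((hmemN' _).2 (Or.inl ⟨(C, D), ⟨hCD, hs⟩, rfl⟩)))
    · by_cases hs : ∃ j, split j = (D, C)
      · obtain ⟨j, hj⟩ := hs
        have h1 : N'.step (ext D) (Z j) :=
          Or.inl ((hmemN' _).2 (Or.inr (Or.inl ⟨j, by rw [hj]⟩)))
        have h2 : N'.step (Z j) (ext C) :=
          Or.inl ((hmemN' _).2 (Or.inr (Or.inr ⟨j, by rw [hj]⟩)))
        exact linked_symm (Relation.ReflTransGen.head h1 (Relation.ReflTransGen.single h2))
      · exact Relation.ReflTransGen.single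
          (Or.inr ((hmemN' _).2 (Or.inl ⟨(D, C), ⟨hCD, hs⟩, rfl⟩)))
  have hlink_up : ∀ C D : Cplx s, N.linked C D → N'.linked (ext C) (ext D) := by
    intro C D hl
    induction hl with
    | refl => exact Relation.ReflTransGen.refl
    | tail _ hstep ih => exact ih.trans (hstep_up _ _ hstep)
  have hstep_down : ∀ X Y, N'.step X Y → N.linked (phi Z split X) (phi Z split Y) := by
    have key : ∀ X Y, (X, Y) ∈ N'.reactions → N.linked (phi Z split X) (phi Z split Y) := by
      intro X Y hXY
      rcases (hmemN' _).1 hXY with ⟨q, ⟨hq, _⟩, he⟩ | ⟨j, he⟩ | ⟨j, he⟩ <;>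
        (injection he with h1 h2; subst h1; subst h2)
      · rw [phi_ext Z split hZnotext, phi_ext Z split hZnotext]
        exact Relation.ReflTransGen.single (Or.inl hq)
      · rw [phi_ext Z split hZnotext, phi_Z Z split hZinj]
        exact Relation.ReflTransGen.refl
      · rw [phi_ext Z split hZnotext, phi_Z Z split hZinj]
        exact Relation.ReflTransGen.single (Or.inl (hmem j))
    intro X Y hXY
    rcases hXY with hXY | hXY
    · exact key X Y hXY
    · exact linked_symm (key Y X hXY)
  have hlink_down : ∀ X Y, N'.linked X Y → N.linked (phi Z split X) (phi Z split Y) := by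
    intro X Y hl
    induction hl with
    | refl => exact Relation.ReflTransGen.refl
    | tail _ hstep ih => exact ih.trans (hstep_down _ _ hstep)
  have hlink_iff : ∀ C D : Cplx s, N.linked C D ↔ N'.linked (ext C) (ext D) := by
    intro C D
    refine ⟨hlink_up C D, fun hl => ?_⟩
    have := hlink_down _ _ hl
    rwa [phi_ext Z split hZnotext, phi_ext Z split hZnotext] at this
  have hZclass : ∀ j, N'.linkageClass (Z j) = N'.linkageClass (ext (split j).1) := by
    intro j
    rw [linkageClass_eq_iff]
    exact linked_symm (Relation.ReflTransGen.single
      (Or.inl ((hmemN' _).2 (Or.inr (Or.inl ⟨j, rfl⟩)))))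
  have hL : N'.numLinkage = N.numLinkage := by
    rw [numLinkage_eq_card_image, numLinkage_eq_card_image, hcx]
    have himg : (N.complexes.image ext ∪ Finset.univ.image Z).image N'.linkageClass
        = N.complexes.image (fun C => N'.linkageClass (ext C)) := by
      rw [Finset.image_union, Finset.image_image, Finset.image_image]
      apply Finset.union_eq_left.2
      intro S hS
      obtain ⟨j, _, rfl⟩ := Finset.mem_image.1 hS
      have hc1 : (split j).1 ∈ N.complexes :=
        Finset.mem_union.2 (Or.inl (Finset.mem_image.2 ⟨split j, hmem j, rfl⟩))
      exact Finset.mem_image.2 ⟨(split j).1, hc1, (hZclass j).symm⟩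
    rw [himg]
    exact card_image_eq_of_ker N.complexes _ N.linkageClass (fun x y => by
      rw [linkageClass_eq_iff, linkageClass_eq_iff]
      exact (hlink_iff x y).symm)
  -- rank
  set a : Fin m → (Fin (s + (m + i)) → ℝ) :=
    fun j => toR (Z j) - toR (ext (split j).1) with ha_def
  have hPa : ∀ j, Pn s (m + i) (a j) = u j := by
    intro j
    show Pn s (m + i) (toR (Z j) - toR (ext (split j).1)) = u j
    rw [map_sub, toR_ext, Pn_Lz, sub_zero]; rfl
  have ha_li : LinearIndependent ℝ a := by
    apply LinearIndependent.of_comp (Pn s (m + i))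
    have : (⇑(Pn s (m + i)) ∘ a) = u := funext hPa
    rw [this]; exact hu_li
  have hstoich : N'.stoichSubspace
      = (N.stoichSubspace.map (Lz s (m + i))) ⊔ Submodule.span ℝ (Set.range a) := by
    apply le_antisymm
    · rw [Network.stoichSubspace, Submodule.span_le]
      rintro v ⟨r, hr, rfl⟩
      rcases (hmemN' r).1 hr with ⟨q, ⟨hq, _⟩, rfl⟩ | ⟨j, rfl⟩ | ⟨j, rfl⟩
      · show toR (ext q.2) - toR (ext q.1) ∈ _
        rw [toR_ext, toR_ext, ← map_sub]
        exact Submodule.mem_sup_left (Submodule.mem_map_of_mem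
          (Submodule.subset_span ⟨q, hq, rfl⟩))
      · show toR (Z j) - toR (ext (split j).1) ∈ _
        exact Submodule.mem_sup_right (Submodule.subset_span ⟨j, rfl⟩)
      · show toR (ext (split j).2) - toR (Z j) ∈ _
        have he : toR (ext (k := m + i) (split j).2) - toR (Z j)
            = Lz s (m + i) (toR (split j).2 - toR (split j).1) - a j := by
          simp only [ha_def, map_sub, ← toR_ext]
          abel
        rw [he]
        exact Submodule.sub_mem _
          (Submodule.mem_sup_left (Submodule.mem_map_of_mem
            (Submodule.subset_span ⟨split j, hmem j, rfl⟩)))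
          (Submodule.mem_sup_right (Submodule.subset_span ⟨j, rfl⟩))
    · apply sup_le
      · rw [Network.stoichSubspace, Submodule.map_span, Submodule.span_le]
        rintro v ⟨w, ⟨r, hr, rfl⟩, rfl⟩
        by_cases hs : ∃ j, split j = r
        · obtain ⟨j, rfl⟩ := hs
          have he : Lz s (m + i) (toR (split j).2 - toR (split j).1)
              = (toR (ext (k := m + i) (split j).2) - toR (Z j)) + a j := by
            simp only [ha_def, map_sub, ← toR_ext]
            abel
          rw [he]
          apply Submodule.add_mem
          · exact Submodule.subset_span
              ⟨(Z j, ext (split j).2), (hmemN' _).2 (Or.inr (Or.inr ⟨j, rfl⟩)), rfl⟩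
          · exact Submodule.subset_span
              ⟨(ext (split j).1, Z j), (hmemN' _).2 (Or.inr (Or.inl ⟨j, rfl⟩)), rfl⟩
        · apply Submodule.subset_span
          exact ⟨(ext r.1, ext r.2), (hmemN' _).2 (Or.inl ⟨r, ⟨hr, hs⟩, rfl⟩),
            by rw [map_sub, ← toR_ext, ← toR_ext]⟩
      · rw [Submodule.span_le]
        rintro v ⟨j, rfl⟩
        exact Submodule.subset_span
          ⟨(ext (split j).1, Z j), (hmemN' _).2 (Or.inr (Or.inl ⟨j, rfl⟩)), rfl⟩
  have hinf : (N.stoichSubspace.map (Lz s (m + i))) ⊓ Submodule.span ℝ (Set.range a) = ⊥ := by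
    rw [eq_bot_iff]
    intro x hx
    obtain ⟨hx1, hx2⟩ := Submodule.mem_inf.1 hx
    obtain ⟨c, hc⟩ := (mem_span_range_iff_exists_fun ℝ).1 hx2
    have hPx : Pn s (m + i) x = 0 := by
      obtain ⟨y, _, rfl⟩ := hx1
      exact Pn_Lz y
    have hsum : ∑ j, c j • u j = 0 := by
      calc ∑ j, c j • u j = Pn s (m + i) (∑ j, c j • a j) := by
            rw [map_sum]
            refine Finset.sum_congr rfl fun j _ => ?_
            rw [map_smul, hPa]
          _ = 0 := by rw [hc, hPx]
    have hc0 : ∀ j, c j = 0 := Fintype.linearIndependent_iff.1 hu_li c hsum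
    have hx0 : x = 0 := by
      rw [← hc]
      simp [hc0]
    rw [hx0]
    exact Submodule.zero_mem ⊥
  have hrk : N'.rank = N.rank + m := by
    show Module.finrank ℝ N'.stoichSubspace = N.rank + m
    rw [hstoich]
    have h1 : Module.finrank ℝ (N.stoichSubspace.map (Lz s (m + i))) = N.rank :=
      (Submodule.equivMapOfInjective _ Lz_injective N.stoichSubspace).symm.finrank_eq
    have h2 : Module.finrank ℝ (Submodule.span ℝ (Set.range a)) = m := by
      rw [finrank_span_eq_card ha_li, Fintype.card_fin]
    have h3 := finrank_sup_add_finrank_inf_eq (N.stoichSubspace.map (Lz s (m + i)))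
      (Submodule.span ℝ (Set.range a))
    rw [hinf, finrank_bot, h1, h2, add_zero] at h3
    exact h3
  -- conclusion
  unfold Network.deficiency
  rw [hCcard, hL, hrk]
  push_cast
  ring
end
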